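/- arXiv:1808.08019 — 6 statements merged into one kernel-verified Lean document; each statement's English description precedes it below -/
import Mathlib

section
/- Let p be an odd prime, m ≥ 1, and g an odd common primitive root modulo p^j and 2p^j for all 1 ≤ j ≤ m. Then Z/2p^m Z is the disjoint union of {0}, {p^m}, and the sets p^{m−j}·2·D_i^{(p^j)} and p^{m−j} D_i^{(2p^j)} for 1 ≤ j ≤ m, 0 ≤ i < d_j. -/
private lemma aux_exists_pow (n gg u : ℕ) (hn : 1 < n)
    (hord : orderOf ((gg : ZMod n)) = n.totient) (hu : Nat.Coprime u n) :
    ∃ s, s < n.totient ∧ gg ^ s ≡ u [MOD n] := by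
  haveI : NeZero n := ⟨by omega⟩
  have htpos : 0 < n.totient := Nat.totient_pos.mpr (by omega)
  have hg1 : (gg : ZMod n) ^ n.totient = 1 := by rw [← hord]; exact pow_orderOf_eq_one _
  have hgu : IsUnit (gg : ZMod n) := IsUnit.of_pow_eq_one hg1 htpos.ne'
  have hou : orderOf hgu.unit = n.totient := by
    rw [← orderOf_units, hgu.unit_spec, hord]
  have hcard : Nat.card (ZMod n)ˣ = n.totient := by
    rw [Nat.card_eq_fintype_card, ZMod.card_units_eq_totient]
  have htop : Subgroup.zpowers hgu.unit = ⊤ := by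
    apply Subgroup.eq_top_of_card_eq
    rw [Nat.card_zpowers, hcard, hou]
  have hmem : ZMod.unitOfCoprime u hu ∈ Subgroup.zpowers hgu.unit :=
    htop ▸ Subgroup.mem_top _
  obtain ⟨k, hk⟩ := mem_powers_iff_mem_zpowers.mpr hmem
  refine ⟨k % n.totient, Nat.mod_lt _ htpos, ?_⟩
  have hk2 : hgu.unit ^ (k % n.totient) = hgu.unit ^ k := by
    apply pow_eq_pow_iff_modEq.mpr
    rw [hou]
    exact Nat.mod_modEq k _
  have hval : ((gg ^ (k % n.totient) : ℕ) : ZMod n) = (u : ZMod n) := by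
    have := congrArg Units.val (hk2.trans hk)
    simpa [ZMod.coe_unitOfCoprime, hgu.unit_spec] using this
  exact (ZMod.natCast_eq_natCast_iff _ _ _).mp hval

private lemma aux_pow_inj (n gg a b : ℕ) (hn : 1 < n)
    (hord : orderOf ((gg : ZMod n)) = n.totient) (h : gg ^ a ≡ gg ^ b [MOD n]) :
    a ≡ b [MOD n.totient] := by
  haveI : NeZero n := ⟨by omega⟩
  have htpos : 0 < n.totient := Nat.totient_pos.mpr (by omega)
  have hg1 : (gg : ZMod n) ^ n.totient = 1 := by rw [← hord]; exact pow_orderOf_eq_one _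
  have hgu : IsUnit (gg : ZMod n) := IsUnit.of_pow_eq_one hg1 htpos.ne'
  have hou : orderOf hgu.unit = n.totient := by
    rw [← orderOf_units, hgu.unit_spec, hord]
  have h1 : (gg : ZMod n) ^ a = (gg : ZMod n) ^ b := by
    have := (ZMod.natCast_eq_natCast_iff _ _ _).mpr h
    push_cast at this
    exact this
  have h2 : hgu.unit ^ a = hgu.unit ^ b := Units.ext (by simpa [hgu.unit_spec] using h1)
  have h3 := pow_eq_pow_iff_modEq.mp h2
  rwa [hou] at h3

/-- `Z/2p^m Z` is the disjoint union of `{0}`, `{p^m}`, and the sets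
`p^{m-j}·2·D_i^{(p^j)}` and `p^{m-j} D_i^{(2p^j)}` for `1 ≤ j ≤ m`, `0 ≤ i < d_j`. -/
theorem zmod_two_pm_partition_cyclotomic (p m e f g : ℕ) (hp : p.Prime) (hop : Odd p)
    (hm : 1 ≤ m) (he : 0 < e) (hf : 0 < f) (hef : p - 1 = e * f) (hg : Odd g)
    (hroot : ∀ j, 1 ≤ j → j ≤ m → orderOf (g : ZMod (p ^ j)) = Nat.totient (p ^ j))
    (hroot2 : ∀ j, 1 ≤ j → j ≤ m →
      orderOf (g : ZMod (2 * p ^ j)) = Nat.totient (2 * p ^ j)) :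
    let E : ℕ → ℕ → Set (ZMod (2 * p ^ m)) := fun j i =>
      {y | ∃ t < e, y = ((2 * p ^ (m - j) * g ^ (i + p ^ (j - 1) * f * t) : ℕ) :
        ZMod (2 * p ^ m))}
    let G : ℕ → ℕ → Set (ZMod (2 * p ^ m)) := fun j i =>
      {y | ∃ t < e, y = ((p ^ (m - j) * g ^ (i + p ^ (j - 1) * f * t) : ℕ) :
        ZMod (2 * p ^ m))}
    (Set.univ = insert (0 : ZMod (2 * p ^ m)) (insert ((p ^ m : ℕ) : ZMod (2 * p ^ m))
        (⋃ j ∈ Finset.Icc 1 m, ⋃ i ∈ Finset.range (p ^ (j - 1) * f), E j i ∪ G j i))) ∧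
    (∀ j ∈ Finset.Icc 1 m, ∀ i < p ^ (j - 1) * f,
      (0 : ZMod (2 * p ^ m)) ∉ E j i ∪ G j i ∧
      ((p ^ m : ℕ) : ZMod (2 * p ^ m)) ∉ E j i ∪ G j i) ∧
    (∀ j ∈ Finset.Icc 1 m, ∀ j' ∈ Finset.Icc 1 m,
      ∀ i < p ^ (j - 1) * f, ∀ i' < p ^ (j' - 1) * f,
        Disjoint (E j i) (G j' i') ∧
        ((j, i) ≠ (j', i') → Disjoint (E j i) (E j' i') ∧ Disjoint (G j i) (G j' i'))) := by
  intro E G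
  have hp2 : 2 ≤ p := hp.two_le
  have hp3 : 3 ≤ p := by
    rcases hop with ⟨k, hk⟩
    omega
  have hppos : 0 < p := by omega
  haveI : NeZero (2 * p ^ m) := ⟨by positivity⟩
  -- p does not divide g
  have hpg : ¬ p ∣ g := by
    have h1 := hroot 1 le_rfl hm
    have htpos : 0 < (p ^ 1).totient := Nat.totient_pos.mpr (by positivity)
    haveI : NeZero (p ^ 1) := ⟨by positivity⟩
    have hunit : IsUnit (g : ZMod (p ^ 1)) :=
      IsUnit.of_pow_eq_one (by rw [← h1]; exact pow_orderOf_eq_one _) htpos.ne'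
    have hcop : Nat.Coprime g (p ^ 1) := (ZMod.isUnit_iff_coprime g (p ^ 1)).mp hunit
    rw [pow_one] at hcop
    exact hp.coprime_iff_not_dvd.mp hcop.symm
  have hpgs : ∀ s, ¬ p ∣ g ^ s := fun s h => hpg (hp.dvd_of_dvd_pow h)
  have hgodd : ∀ s, Odd (g ^ s) := fun s => hg.pow
  -- totient computations
  have htot : ∀ j, 1 ≤ j → (p ^ j).totient = p ^ (j - 1) * f * e := by
    intro j hj
    rw [Nat.totient_prime_pow hp (by omega), hef]
    ring
  have htot2 : ∀ j, 1 ≤ j → (2 * p ^ j).totient = p ^ (j - 1) * f * e := by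
    intro j hj
    rw [Nat.totient_mul (Nat.coprime_two_left.mpr hop.pow), Nat.totient_two, one_mul,
      htot j hj]
  have hone_lt : ∀ j, 1 ≤ j → 1 < p ^ j := fun j hj =>
    Nat.one_lt_pow (by omega) (by omega)
  have hone_lt2 : ∀ j, 1 ≤ j → 1 < 2 * p ^ j := by
    intro j hj
    have := pow_pos hppos j
    omega
  -- main covering lemma
  have hmain : ∀ n : ℕ, 0 < n → n < 2 * p ^ m → n ≠ p ^ m →
      ∃ j, (1 ≤ j ∧ j ≤ m) ∧ ∃ i, i < p ^ (j - 1) * f ∧ ∃ t, t < e ∧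
        (n ≡ 2 * p ^ (m - j) * g ^ (i + p ^ (j - 1) * f * t) [MOD 2 * p ^ m] ∨
         n ≡ p ^ (m - j) * g ^ (i + p ^ (j - 1) * f * t) [MOD 2 * p ^ m]) := by
    intro n hn0 hnN hnp
    rcases Nat.even_or_odd n with hev | hod
    · -- even case
      obtain ⟨y, hy⟩ := hev
      have hy0 : y ≠ 0 := by omega
      have hyP : y < p ^ m := by omega
      obtain ⟨v, u, hpu, huv⟩ := Nat.exists_eq_pow_mul_and_not_dvd hy0 p hp.ne_one
      have hu0 : 0 < u := by
        rcases Nat.eq_zero_or_pos u with h | h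
        · exfalso; apply hy0; rw [huv, h, mul_zero]
        · exact h
      have hvm : v < m := by
        by_contra h
        have h1 : p ^ m ≤ p ^ v := Nat.pow_le_pow_right hppos (by omega)
        have h2 : p ^ v ≤ p ^ v * u := Nat.le_mul_of_pos_right _ hu0
        omega
      have hmj : m - (m - v) = v := by omega
      obtain ⟨s, hslt, hs⟩ := aux_exists_pow (p ^ (m - v)) g u (hone_lt _ (by omega))
        (hroot _ (by omega) (by omega)) ((hp.coprime_iff_not_dvd.mpr hpu).symm.pow_right _)
      rw [htot (m - v) (by omega)] at hslt
      have hd0 : 0 < p ^ (m - v - 1) * f := by positivity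
      refine ⟨m - v, ⟨by omega, by omega⟩, s % (p ^ (m - v - 1) * f), Nat.mod_lt _ hd0,
        s / (p ^ (m - v - 1) * f), ?_, Or.inl ?_⟩
      · exact (Nat.div_lt_iff_lt_mul hd0).mpr (by rw [Nat.mul_comm]; exact hslt)
      · rw [Nat.mod_add_div s (p ^ (m - v - 1) * f), hmj]
        have hmod : (2 * p ^ v) * u ≡ (2 * p ^ v) * g ^ s [MOD (2 * p ^ v) * p ^ (m - v)] :=
          Nat.ModEq.mul_left' _ hs.symm
        have e1 : (2 * p ^ v) * p ^ (m - v) = 2 * p ^ m := by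
          rw [mul_assoc, ← pow_add]
          congr 2
          omega
        rw [e1] at hmod
        have e2 : n = (2 * p ^ v) * u := by rw [hy, huv]; ring
        rw [e2]
        exact hmod
    · -- odd case
      have hn2 : ¬ (2 ∣ n) := by
        rw [Nat.odd_iff] at hod
        omega
      obtain ⟨v, u, hpu, huv⟩ := Nat.exists_eq_pow_mul_and_not_dvd (by omega : n ≠ 0) p hp.ne_one
      have hu0 : 0 < u := by
        rcases Nat.eq_zero_or_pos u with h | h
        · subst h; rw [mul_zero] at huv; omega
        · exact h
      have hu2 : ¬ (2 ∣ u) := fun h => hn2 (huv ▸ Dvd.dvd.mul_left h _)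
      have hvm : v < m := by
        by_contra h
        have h1 : p ^ m ∣ n := dvd_trans (pow_dvd_pow p (by omega)) ⟨u, huv⟩
        obtain ⟨w, hw⟩ := h1
        have hpm : 0 < p ^ m := pow_pos hppos m
        have hw2 : w < 2 := by
          by_contra h2
          have : 2 * p ^ m ≤ p ^ m * w := by nlinarith
          omega
        have hw1 : w = 1 := by
          rcases Nat.eq_zero_or_pos w with h3 | h3
          · subst h3; rw [mul_zero] at hw; omega
          · omega
        apply hnp
        rw [hw, hw1, mul_one]
      have hmj : m - (m - v) = v := by omega
      have hucop : Nat.Coprime u (2 * p ^ (m - v)) := by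
        apply Nat.Coprime.mul_right
        · exact Nat.coprime_two_right.mpr (Nat.odd_iff.mpr (by omega))
        · exact ((hp.coprime_iff_not_dvd.mpr hpu).symm.pow_right _)
      obtain ⟨s, hslt, hs⟩ := aux_exists_pow (2 * p ^ (m - v)) g u (hone_lt2 _ (by omega))
        (hroot2 _ (by omega) (by omega)) hucop
      rw [htot2 (m - v) (by omega)] at hslt
      have hd0 : 0 < p ^ (m - v - 1) * f := by positivity
      refine ⟨m - v, ⟨by omega, by omega⟩, s % (p ^ (m - v - 1) * f), Nat.mod_lt _ hd0,
        s / (p ^ (m - v - 1) * f), ?_, Or.inr ?_⟩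
      · exact (Nat.div_lt_iff_lt_mul hd0).mpr (by rw [Nat.mul_comm]; exact hslt)
      · rw [Nat.mod_add_div s (p ^ (m - v - 1) * f), hmj]
        have hmod : p ^ v * u ≡ p ^ v * g ^ s [MOD p ^ v * (2 * p ^ (m - v))] :=
          Nat.ModEq.mul_left' _ hs.symm
        have e1 : p ^ v * (2 * p ^ (m - v)) = 2 * p ^ m := by
          rw [mul_comm (2 : ℕ) (p ^ (m - v)), ← mul_assoc, ← pow_add]
          rw [(by omega : v + (m - v) = m)]
          ring
        rw [e1] at hmod
        rw [huv]
        exact hmod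
  -- divisibility / non-membership facts
  have hA_ndvd : ∀ j, 1 ≤ j → j ≤ m → ∀ s, ¬ (2 * p ^ m ∣ 2 * p ^ (m - j) * g ^ s) := by
    intro j hj1 hjm s hdvd
    rw [mul_assoc] at hdvd
    have h1 : p ^ m ∣ p ^ (m - j) * g ^ s :=
      (mul_dvd_mul_iff_left (two_ne_zero : (2 : ℕ) ≠ 0)).mp hdvd
    have h2 : p ^ (m - j) * p ^ j ∣ p ^ (m - j) * g ^ s := by
      rwa [← pow_add, (by omega : m - j + j = m)]
    have h3 : p ^ j ∣ g ^ s :=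
      (mul_dvd_mul_iff_left (pow_ne_zero _ (by omega : p ≠ 0))).mp h2
    exact hpgs s (dvd_trans (dvd_pow_self p (by omega)) h3)
  have hB_ndvd : ∀ j s, ¬ (2 * p ^ m ∣ p ^ (m - j) * g ^ s) := by
    intro j s hdvd
    have h1 : (2 : ℕ) ∣ p ^ (m - j) * g ^ s := dvd_trans ⟨p ^ m, rfl⟩ hdvd
    have hodd : Odd (p ^ (m - j) * g ^ s) := (hop.pow).mul (hg.pow)
    rw [Nat.odd_iff] at hodd
    omega
  have hpmA : ∀ j s, ¬ (p ^ m ≡ 2 * p ^ (m - j) * g ^ s [MOD 2 * p ^ m]) := by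
    intro j s h
    have h2 := h.of_dvd (⟨p ^ m, rfl⟩ : (2 : ℕ) ∣ 2 * p ^ m)
    have hpm : p ^ m % 2 = 1 := Nat.odd_iff.mp hop.pow
    have hA2 : (2 : ℕ) ∣ 2 * p ^ (m - j) * g ^ s := by
      rw [mul_assoc]
      exact Dvd.intro _ rfl
    unfold Nat.ModEq at h2
    omega
  have hpmB : ∀ j, 1 ≤ j → j ≤ m → ∀ s, ¬ (p ^ m ≡ p ^ (m - j) * g ^ s [MOD 2 * p ^ m]) := by
    intro j hj1 hjm s h
    have e1 : p ^ m = p ^ (m - j) * p ^ j := by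
      rw [← pow_add, (by omega : m - j + j = m)]
    have e2 : 2 * p ^ m = p ^ (m - j) * (2 * p ^ j) := by rw [e1]; ring
    rw [e2, e1] at h
    have h3 : p ^ j ≡ g ^ s [MOD 2 * p ^ j] :=
      Nat.ModEq.mul_left_cancel' (pow_ne_zero _ (by omega : p ≠ 0)) h
    have hpd : p ∣ 2 * p ^ j := dvd_mul_of_dvd_right (dvd_pow_self p (by omega)) 2
    have h4 : p ∣ g ^ s := (h3.dvd_iff hpd).mp (dvd_pow_self p (by omega))
    exact hpgs s h4
  -- valuation separation lemmas
  have hvalE : ∀ j j', 1 ≤ j' → j' ≤ m → j < j' → ∀ s s',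
      ¬ (2 * p ^ (m - j) * g ^ s ≡ 2 * p ^ (m - j') * g ^ s' [MOD 2 * p ^ m]) := by
    intro j j' hj'1 hj'm hlt s s' h
    have hq1 : p ^ (m - j' + 1) ∣ 2 * p ^ (m - j) * g ^ s := by
      apply dvd_mul_of_dvd_left
      exact dvd_mul_of_dvd_right (pow_dvd_pow p (by omega)) 2
    have hqm : p ^ (m - j' + 1) ∣ 2 * p ^ m :=
      dvd_mul_of_dvd_right (pow_dvd_pow p (by omega)) 2
    have hq2 : p ^ (m - j' + 1) ∣ 2 * p ^ (m - j') * g ^ s' := (h.dvd_iff hqm).mp hq1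
    have hq3 : p ^ (m - j') * p ∣ p ^ (m - j') * (2 * g ^ s') := by
      rw [← pow_succ]
      rwa [(by ring : p ^ (m - j') * (2 * g ^ s') = 2 * p ^ (m - j') * g ^ s')]
    have hq4 : p ∣ 2 * g ^ s' :=
      (mul_dvd_mul_iff_left (pow_ne_zero _ (by omega : p ≠ 0))).mp hq3
    rcases (hp.dvd_mul).mp hq4 with h5 | h5
    · have := Nat.le_of_dvd (by omega) h5
      omega
    · exact hpgs s' h5
  have hvalG : ∀ j j', 1 ≤ j' → j' ≤ m → j < j' → ∀ s s',
      ¬ (p ^ (m - j) * g ^ s ≡ p ^ (m - j') * g ^ s' [MOD 2 * p ^ m]) := by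
    intro j j' hj'1 hj'm hlt s s' h
    have hq1 : p ^ (m - j' + 1) ∣ p ^ (m - j) * g ^ s :=
      dvd_mul_of_dvd_left (pow_dvd_pow p (by omega)) _
    have hqm : p ^ (m - j' + 1) ∣ 2 * p ^ m :=
      dvd_mul_of_dvd_right (pow_dvd_pow p (by omega)) 2
    have hq2 : p ^ (m - j' + 1) ∣ p ^ (m - j') * g ^ s' := (h.dvd_iff hqm).mp hq1
    have hq3 : p ^ (m - j') * p ∣ p ^ (m - j') * g ^ s' := by
      rwa [← pow_succ]
    have hq4 : p ∣ g ^ s' :=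
      (mul_dvd_mul_iff_left (pow_ne_zero _ (by omega : p ≠ 0))).mp hq3
    exact hpgs s' hq4
  refine ⟨?_, ?_, ?_⟩
  · -- covering
    apply Set.eq_of_subset_of_subset _ (Set.subset_univ _)
    intro x _
    by_cases hx0 : x = 0
    · exact Set.mem_insert_iff.mpr (Or.inl hx0)
    by_cases hxp : x = ((p ^ m : ℕ) : ZMod (2 * p ^ m))
    · exact Set.mem_insert_iff.mpr (Or.inr (Set.mem_insert_iff.mpr (Or.inl hxp)))
    refine Set.mem_insert_iff.mpr (Or.inr (Set.mem_insert_iff.mpr (Or.inr ?_)))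
    have hval : ((x.val : ℕ) : ZMod (2 * p ^ m)) = x := ZMod.natCast_zmod_val x
    have hv0 : 0 < x.val := by
      rcases Nat.eq_zero_or_pos x.val with h | h
      · exact absurd (((ZMod.val_eq_zero x).mp h)) hx0
      · exact h
    have hvp : x.val ≠ p ^ m := fun h => hxp (by rw [← hval, h])
    obtain ⟨j, ⟨hj1, hjm⟩, i, hi, t, ht, hor⟩ := hmain x.val hv0 (ZMod.val_lt x) hvp
    simp only [Set.mem_iUnion]
    refine ⟨j, Finset.mem_Icc.mpr ⟨hj1, hjm⟩, i, Finset.mem_range.mpr hi, ?_⟩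
    rcases hor with h | h
    · exact Or.inl ⟨t, ht, by rw [← hval, ZMod.natCast_eq_natCast_iff]; exact h⟩
    · exact Or.inr ⟨t, ht, by rw [← hval, ZMod.natCast_eq_natCast_iff]; exact h⟩
  · -- 0 and p^m not in any E/G
    intro j hj i hi
    obtain ⟨hj1, hjm⟩ := Finset.mem_Icc.mp hj
    constructor
    · rintro (⟨t, ht, h0⟩ | ⟨t, ht, h0⟩)
      · exact hA_ndvd j hj1 hjm _ ((ZMod.natCast_eq_zero_iff _ _).mp h0.symm)
      · exact hB_ndvd j _ ((ZMod.natCast_eq_zero_iff _ _).mp h0.symm)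
    · rintro (⟨t, ht, h0⟩ | ⟨t, ht, h0⟩)
      · exact hpmA j _ ((ZMod.natCast_eq_natCast_iff _ _ _).mp h0)
      · exact hpmB j hj1 hjm _ ((ZMod.natCast_eq_natCast_iff _ _ _).mp h0)
  · -- disjointness
    intro j hj j' hj' i hi i' hi'
    obtain ⟨hj1, hjm⟩ := Finset.mem_Icc.mp hj
    obtain ⟨hj1', hjm'⟩ := Finset.mem_Icc.mp hj'
    constructor
    · -- E disjoint G : parity
      rw [Set.disjoint_left]
      rintro a ⟨t, ht, rfl⟩ ⟨t', ht', hEq⟩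
      have h := (ZMod.natCast_eq_natCast_iff _ _ _).mp hEq
      have h2 := h.of_dvd (⟨p ^ m, rfl⟩ : (2 : ℕ) ∣ 2 * p ^ m)
      have hA2 : (2 : ℕ) ∣ 2 * p ^ (m - j) * g ^ (i + p ^ (j - 1) * f * t) := by
        rw [mul_assoc]; exact Dvd.intro _ rfl
      have hBodd : Odd (p ^ (m - j') * g ^ (i' + p ^ (j' - 1) * f * t')) :=
        (hop.pow).mul (hg.pow)
      rw [Nat.odd_iff] at hBodd
      unfold Nat.ModEq at h2
      omega
    · intro hne
      constructor
      · -- E disjoint E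
        rw [Set.disjoint_left]
        rintro a ⟨t, ht, rfl⟩ ⟨t', ht', hEq⟩
        have h := (ZMod.natCast_eq_natCast_iff _ _ _).mp hEq
        have hjj : j = j' := by
          rcases lt_trichotomy j j' with hlt | heq | hgt
          · exact absurd h (hvalE j j' hj1' hjm' hlt _ _)
          · exact heq
          · exact absurd h.symm (hvalE j' j hj1 hjm hgt _ _)
        subst hjj
        have e2 : 2 * p ^ m = (2 * p ^ (m - j)) * p ^ j := by
          rw [mul_assoc, ← pow_add, (by omega : m - j + j = m)]
        rw [e2] at h
        have h3 := Nat.ModEq.mul_left_cancel'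
          (by positivity : (2 : ℕ) * p ^ (m - j) ≠ 0) h
        have h4 := aux_pow_inj (p ^ j) g _ _ (hone_lt j hj1) (hroot j hj1 hjm) h3
        rw [htot j hj1] at h4
        have h5 := h4.of_mul_right e
        unfold Nat.ModEq at h5
        rw [Nat.add_mul_mod_self_left, Nat.add_mul_mod_self_left,
          Nat.mod_eq_of_lt hi, Nat.mod_eq_of_lt hi'] at h5
        exact hne (by rw [h5])
      · -- G disjoint G
        rw [Set.disjoint_left]
        rintro a ⟨t, ht, rfl⟩ ⟨t', ht', hEq⟩
        have h := (ZMod.natCast_eq_natCast_iff _ _ _).mp hEq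
        have hjj : j = j' := by
          rcases lt_trichotomy j j' with hlt | heq | hgt
          · exact absurd h (hvalG j j' hj1' hjm' hlt _ _)
          · exact heq
          · exact absurd h.symm (hvalG j' j hj1 hjm hgt _ _)
        subst hjj
        have e2 : 2 * p ^ m = p ^ (m - j) * (2 * p ^ j) := by
          rw [← mul_assoc, mul_comm (p ^ (m - j)) 2, mul_assoc, ← pow_add,
            (by omega : m - j + j = m)]
        rw [e2] at h
        have h3 := Nat.ModEq.mul_left_cancel'
          (pow_ne_zero _ (by omega : p ≠ 0)) h
        have h4 := aux_pow_inj (2 * p ^ j) g _ _ (hone_lt2 j hj1) (hroot2 j hj1 hjm) h3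
        rw [htot2 j hj1] at h4
        have h5 := h4.of_mul_right e
        unfold Nat.ModEq at h5
        rw [Nat.add_mul_mod_self_left, Nat.add_mul_mod_self_left,
          Nat.mod_eq_of_lt hi, Nat.mod_eq_of_lt hi'] at h5
        exact hne (by rw [h5])
end

section
/- With f = 2^r (r ≥ 1), δ_j = p^{j−1}f/2, and H̄_b^{(p^j)}(x) = Σ_{i=0}^{δ_j−1} Σ_{t ∈ p^{m−j}D_{i+b}^{(p^j)}} x^t evaluated at a primitive p^m-th root of unity β over F_2: H̄_b^{(p)}(β) + H̄_{b+f/2}^{(p)}(β) = 1, and for 2 ≤ j ≤ m, H̄_b^{(p^j)}(β) + H̄_{b+δ_j}^{(p^j)}(β) = 0. -/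
lemma sum_grid {M : Type*} [AddCommMonoid M] (d e : ℕ) (F : ℕ → M) :
    ∑ i ∈ Finset.range d, ∑ t ∈ Finset.range e, F (i + d * t) =
      ∑ k ∈ Finset.range (d * e), F k := by
  induction e with
  | zero => simp
  | succ e ih =>
    rw [Nat.mul_succ, Finset.sum_range_add, ← ih]
    simp only [Finset.sum_range_succ, Finset.sum_add_distrib]
    congr 1
    refine Finset.sum_congr rfl fun i _ => ?_
    rw [Nat.add_comm (d * e) i]

lemma core_sum (p j b g : ℕ) (hp : p.Prime) (hj : 1 ≤ j)
    (hg : orderOf (g : ZMod (p ^ j)) = (p ^ j).totient)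
    {F : Type*} [Field F] (hchar : CharP F 2) (γ : F) (hγ : orderOf γ = p ^ j) :
    ∑ k ∈ Finset.range ((p ^ j).totient), γ ^ (g ^ (b + k)) =
      if j = 1 then 1 else 0 := by
  haveI := hchar
  have hp0 : 0 < p := hp.pos
  have hn0 : 0 < p ^ j := pow_pos hp0 j
  haveI : NeZero (p ^ j) := ⟨hn0.ne'⟩
  set n := p ^ j with hn
  set E : ℕ → ℕ := fun k => ((g : ZMod n) ^ (b + k)).val with hE
  have hEk : ∀ k, E k = g ^ (b + k) % n := by
    intro k
    rw [hE]
    simp only [← Nat.cast_pow, ZMod.val_natCast]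
  have hterm : ∀ k, γ ^ (g ^ (b + k)) = γ ^ (E k) := by
    intro k
    rw [hEk, ← hγ, pow_mod_orderOf]
  have hgu : IsUnit (g : ZMod n) := by
    refine IsOfFinOrder.isUnit ?_
    rw [← orderOf_pos_iff, hg]
    exact Nat.totient_pos.mpr hn0
  have hinj : Set.InjOn E ↑(Finset.range n.totient) := by
    intro k1 hk1 k2 hk2 hval
    simp only [Finset.coe_range, Set.mem_Iio] at hk1 hk2
    have : (g : ZMod n) ^ (b + k1) = (g : ZMod n) ^ (b + k2) := by
      have := congrArg (fun x : ℕ => (x : ZMod n)) hval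
      simpa [hE, ZMod.natCast_val, ZMod.cast_id] using this
    rw [pow_add, pow_add] at this
    have h2 : (g : ZMod n) ^ k1 = (g : ZMod n) ^ k2 :=
      (hgu.pow b).mul_left_cancel this
    exact pow_injOn_Iio_orderOf (by rwa [hg]) (by rwa [hg]) h2
  have hcop : ∀ k : ℕ, n.Coprime k ↔ ¬ p ∣ k := by
    intro k
    rw [hn, Nat.coprime_pow_left_iff hj, hp.coprime_iff_not_dvd]
  have himg : Finset.image E (Finset.range n.totient) =
      (Finset.range n).filter (fun k => ¬ p ∣ k) := by
    apply Finset.eq_of_subset_of_card_le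
    · intro x hx
      obtain ⟨k, hk, rfl⟩ := Finset.mem_image.mp hx
      refine Finset.mem_filter.mpr ⟨Finset.mem_range.mpr (ZMod.val_lt _), ?_⟩
      rw [← hcop, Nat.coprime_comm]
      have : IsUnit ((E k : ℕ) : ZMod n) := by
        simpa [hE, ZMod.natCast_val, ZMod.cast_id] using hgu.pow (b + k)
      exact (ZMod.isUnit_iff_coprime _ _).mp this
    · rw [Finset.card_image_of_injOn hinj, Finset.card_range]
      have : (Finset.range n).filter (fun k => ¬ p ∣ k)
          = (Finset.range n).filter n.Coprime := by
        refine Finset.filter_congr fun k _ => ?_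
        simp [hcop k]
      rw [this, ← Nat.totient_eq_card_coprime]
  have hsum1 : ∑ k ∈ Finset.range n.totient, γ ^ (g ^ (b + k)) =
      ∑ x ∈ (Finset.range n).filter (fun k => ¬ p ∣ k), γ ^ x := by
    rw [← himg, Finset.sum_image hinj]
    exact Finset.sum_congr rfl fun k _ => hterm k
  have hγ1 : γ ≠ 1 := by
    intro h
    rw [h, orderOf_one] at hγ
    have hn1 : 1 < n := by
      rw [hn]; exact Nat.one_lt_pow (show j ≠ 0 by omega) hp.one_lt
    omega
  have htot : ∑ x ∈ Finset.range n, γ ^ x = 0 := by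
    rw [geom_sum_eq hγ1, ← hγ, pow_orderOf_eq_one, sub_self, zero_div]
  have hdiv : ∑ x ∈ (Finset.range n).filter (fun k => p ∣ k), γ ^ x =
      ∑ y ∈ Finset.range (p ^ (j - 1)), (γ ^ p) ^ y := by
    refine Finset.sum_nbij' (fun k => k / p) (fun y => p * y) ?_ ?_ ?_ ?_ ?_
    · intro k hk
      obtain ⟨hk1, hk2⟩ := Finset.mem_filter.mp hk
      refine Finset.mem_range.mpr ?_
      rw [Nat.div_lt_iff_lt_mul hp0]
      calc k < n := Finset.mem_range.mp hk1
        _ = p ^ (j-1) * p := by rw [hn, ← pow_succ]; congr 1; omega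
    · intro y hy
      refine Finset.mem_filter.mpr ⟨Finset.mem_range.mpr ?_, ⟨y, rfl⟩⟩
      have hy' := Finset.mem_range.mp hy
      calc p * y < p * p ^ (j-1) := (Nat.mul_lt_mul_left hp0).mpr hy'
        _ = n := by rw [hn, ← pow_succ']; congr 1; omega
    · intro k hk
      exact Nat.mul_div_cancel' (Finset.mem_filter.mp hk).2
    · intro y _; exact Nat.mul_div_cancel_left y hp0
    · intro k hk
      rw [← pow_mul, Nat.mul_div_cancel' (Finset.mem_filter.mp hk).2]
  have hdivval : ∑ y ∈ Finset.range (p ^ (j - 1)), (γ ^ p) ^ y =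
      if j = 1 then 1 else 0 := by
    by_cases h1 : j = 1
    · subst h1; simp
    · have hj2 : 2 ≤ j := by omega
      have hpdvd : p ∣ n := by rw [hn]; exact dvd_pow_self p (by omega)
      have hnp : n / p = p ^ (j - 1) := by
        rw [hn, ← Nat.pow_div hj hp0, pow_one]
      have hord : orderOf (γ ^ p) = p ^ (j - 1) := by
        rw [orderOf_pow' γ hp0.ne', hγ, Nat.gcd_eq_right hpdvd, hnp]
      have hne : γ ^ p ≠ 1 := by
        intro h
        rw [h, orderOf_one] at hord
        have : 1 < p ^ (j - 1) := Nat.one_lt_pow (show j - 1 ≠ 0 by omega) hp.one_lt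
        omega
      rw [geom_sum_eq hne, ← hord, pow_orderOf_eq_one, sub_self, zero_div]
      simp [h1]
  have hsplit := Finset.sum_filter_add_sum_filter_not (Finset.range n)
    (fun k => p ∣ k) (fun x => γ ^ x)
  rw [htot] at hsplit
  rw [hsum1]
  have heq : ∑ x ∈ (Finset.range n).filter (fun k => ¬ p ∣ k), γ ^ x
      = ∑ x ∈ (Finset.range n).filter (fun k => p ∣ k), γ ^ x := by
    have h := eq_neg_of_add_eq_zero_right hsplit
    rw [h, CharTwo.neg_eq]
  rw [heq, hdiv, hdivval]

/-- Lemma 1 (Xiao et al., Lemma 4): with `f = 2^r`, `δ_j = p^{j-1} f / 2`,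
and `H̄_b^{(p^j)}(β) = Σ_{i<δ_j} Σ_{t ∈ p^{m-j} D_{i+b}^{(p^j)}} β^t`,
one has `H̄_b^{(p)}(β) + H̄_{b+f/2}^{(p)}(β) = 1` and, for `2 ≤ j ≤ m`,
`H̄_b^{(p^j)}(β) + H̄_{b+δ_j}^{(p^j)}(β) = 0`. -/
theorem Hbar_shift_sum (p m e f r g b : ℕ) (hp : p.Prime) (hop : Odd p)
    (hm : 1 ≤ m) (hr : 1 ≤ r) (hf : f = 2 ^ r) (he : 0 < e) (hef : p - 1 = e * f)
    (hroot : ∀ j, 1 ≤ j → j ≤ m → orderOf (g : ZMod (p ^ j)) = Nat.totient (p ^ j))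
    {F : Type*} [Field F] (hchar : CharP F 2) (β : F) (hβ : orderOf β = p ^ m) :
    let H : ℕ → ℕ → F := fun v j =>
      ∑ i ∈ Finset.range (p ^ (j - 1) * f / 2), ∑ t ∈ Finset.range e,
        β ^ (p ^ (m - j) * g ^ (v + i + p ^ (j - 1) * f * t))
    (H b 1 + H (b + f / 2) 1 = 1) ∧
    (∀ j, 2 ≤ j → j ≤ m → H b j + H (b + p ^ (j - 1) * f / 2) j = 0) := by
  intro H
  have hp0 : 0 < p := hp.pos
  have key : ∀ j, 1 ≤ j → j ≤ m →
      H b j + H (b + p ^ (j - 1) * f / 2) j = if j = 1 then 1 else 0 := by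
    intro j hj1 hjm
    set γ : F := β ^ (p ^ (m - j)) with hγdef
    have hγ : orderOf γ = p ^ j := by
      rw [hγdef, orderOf_pow' β (pow_pos hp0 (m-j)).ne', hβ,
        Nat.gcd_eq_right (pow_dvd_pow p (by omega)), Nat.pow_div (by omega) hp0]
      congr 1; omega
    have hδ : p ^ (j - 1) * f / 2 + p ^ (j - 1) * f / 2 = p ^ (j - 1) * f := by
      have : p ^ (j - 1) * f = 2 * (p ^ (j-1) * 2 ^ (r-1)) := by
        rw [hf, show (2:ℕ) ^ r = 2 * 2 ^ (r-1) by rw [← pow_succ']; congr 1; omega]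
        ring
      omega
    have hHterm : ∀ v, H v j = ∑ i ∈ Finset.range (p^(j-1)*f / 2), ∑ t ∈ Finset.range e,
        γ ^ (g ^ (v + i + p^(j-1)*f * t)) := by
      intro v
      simp only [H]
      refine Finset.sum_congr rfl fun i _ => Finset.sum_congr rfl fun t _ => ?_
      rw [hγdef, ← pow_mul]
    rw [hHterm, hHterm]
    have hcomb := Finset.sum_range_add
      (fun i => ∑ t ∈ Finset.range e, γ ^ (g ^ (b + i + p^(j-1)*f * t)))
      (p^(j-1)*f/2) (p^(j-1)*f/2)
    rw [hδ] at hcomb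
    have hshift : ∑ i ∈ Finset.range (p^(j-1)*f/2), ∑ t ∈ Finset.range e,
          γ ^ (g ^ (b + p^(j-1)*f/2 + i + p^(j-1)*f * t))
        = ∑ i ∈ Finset.range (p^(j-1)*f/2), ∑ t ∈ Finset.range e,
          γ ^ (g ^ (b + (p^(j-1)*f/2 + i) + p^(j-1)*f * t)) := by
      refine Finset.sum_congr rfl fun i _ => Finset.sum_congr rfl fun t _ => ?_
      congr 2
      omega
    rw [hshift, ← hcomb]
    have hgrid : ∑ i ∈ Finset.range (p^(j-1)*f), ∑ t ∈ Finset.range e,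
          γ ^ (g ^ (b + i + p^(j-1)*f * t))
        = ∑ k ∈ Finset.range (p^(j-1)*f * e), γ ^ (g ^ (b + k)) := by
      rw [← sum_grid (p^(j-1)*f) e (fun k => γ ^ (g ^ (b + k)))]
      refine Finset.sum_congr rfl fun i _ => Finset.sum_congr rfl fun t _ => ?_
      congr 2
      omega
    have hde : p^(j-1)*f * e = (p^j).totient := by
      rw [Nat.totient_prime_pow hp hj1, hef]; ring
    rw [hgrid, hde]
    exact core_sum p j b g hp hj1 (hroot j hj1 hjm) hchar γ hγ
  constructor
  · have h := key 1 le_rfl hm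
    simpa using h
  · intro j hj2 hjm
    have h := key j (by omega) hjm
    simpa [show j ≠ 1 by omega] using h
end

section
/- Let a ∈ p^l D_k^{(p^{m−l})} with 0 ≤ l ≤ m−1. Then H̄_b^{(p^{l+1})}(β^a) = (p^l−1)/2 + H̄_{b+k}^{(p)}(β) in GF(2^n), where (p^l−1)/2 is read modulo 2. -/
private lemma sum_range_mul_split {M : Type*} [AddCommMonoid M] (F : ℕ → M) (f e : ℕ) :
    ∑ j ∈ Finset.range (f * e), F j
      = ∑ i ∈ Finset.range f, ∑ t ∈ Finset.range e, F (i + f * t) := by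
  induction e with
  | zero => simp
  | succ e ih =>
      rw [Nat.mul_succ, Finset.sum_range_add, ih, ← Finset.sum_add_distrib]
      refine Finset.sum_congr rfl fun i _ => ?_
      rw [Finset.sum_range_succ, add_comm (f * e) i]

private lemma sum_range_natCast_zmod {M : Type*} [AddCommMonoid M] (N : ℕ) [NeZero N]
    (H : ZMod N → M) : ∑ t ∈ Finset.range N, H (t : ZMod N) = ∑ x : ZMod N, H x := by
  apply Finset.sum_nbij (i := fun t => (t : ZMod N)) (f := fun t : ℕ => H (t : ZMod N)) (g := H)
  · intros; exact Finset.mem_univ _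
  · intro a ha b hb hab
    simp only [Finset.coe_range, Set.mem_Iio] at ha hb
    have := congrArg ZMod.val hab
    rwa [ZMod.val_natCast, ZMod.val_natCast, Nat.mod_eq_of_lt ha, Nat.mod_eq_of_lt hb] at this
  · intro x _
    refine ⟨x.val, ?_, ?_⟩
    · simp only [Finset.coe_range, Set.mem_Iio]; exact ZMod.val_lt x
    · exact ZMod.natCast_rightInverse x
  · intros; rfl

private lemma sum_zmod_addMul {M : Type*} [AddCommMonoid M] (N : ℕ) [NeZero N]
    (H : ZMod N → M) (u s : ℕ) (hs : Nat.Coprime s N) :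
    ∑ x : ZMod N, H ((u : ZMod N) + (s : ZMod N) * x) = ∑ x : ZMod N, H x := by
  have h := Equiv.sum_comp ((Units.mulLeft (ZMod.unitOfCoprime s hs)).trans
    (Equiv.addLeft (u : ZMod N))) H
  simpa [ZMod.coe_unitOfCoprime] using h

/-- Lemma 2(2): for `a ∈ p^l D_k^{(p^{m-l})}` with `0 ≤ l ≤ m-1`,
`H̄_b^{(p^{l+1})}(β^a) = (p^l - 1)/2 + H̄_{b+k}^{(p)}(β)` (the integer
`(p^l - 1)/2` being read modulo 2). -/
theorem Hbar_eval_middle_level (p m e f r g b l k t₀ : ℕ) (hp : p.Prime) (hop : Odd p)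
    (hm : 1 ≤ m) (hr : 1 ≤ r) (hf : f = 2 ^ r) (he : 0 < e) (hef : p - 1 = e * f)
    (hroot : ∀ j, 1 ≤ j → j ≤ m → orderOf (g : ZMod (p ^ j)) = Nat.totient (p ^ j))
    (hl : l ≤ m - 1) (ht₀ : t₀ < e)
    {F : Type*} [Field F] (hchar : CharP F 2) (β : F) (hβ : orderOf β = p ^ m) :
    -- `a` is a representative of an element of `p^l D_k^{(p^{m-l})}`
    let a : ℕ := p ^ l * g ^ (k + p ^ (m - l - 1) * f * t₀)
    ∑ i ∈ Finset.range (p ^ l * f / 2), ∑ t ∈ Finset.range e,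
        β ^ (a * (p ^ (m - (l + 1)) * g ^ (b + i + p ^ l * f * t)))
      = (((p ^ l - 1) / 2 : ℕ) : F) +
        ∑ i ∈ Finset.range (f / 2), ∑ t ∈ Finset.range e,
          β ^ (p ^ (m - 1) * g ^ (b + k + i + f * t)) := by
  intro a
  haveI := hchar
  have ha : a = p ^ l * g ^ (k + p ^ (m - l - 1) * f * t₀) := rfl
  have hp2 : 2 ≤ p := hp.two_le
  have hp3 : 3 ≤ p := by
    rcases hop with ⟨c, hc⟩; omega
  have hlm : l + 1 ≤ m := by omega
  have hfpos : 0 < f := by rw [hf]; positivity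
  have hnpos : 0 < p - 1 := by omega
  haveI : NeZero e := ⟨by omega⟩
  haveI : NeZero (p - 1) := ⟨by omega⟩
  -- the element γ of order p
  set γ : F := β ^ (p ^ (m - 1)) with hγ
  have hpm : p ^ (m - 1) * p = p ^ m := by
    rw [← pow_succ]; congr 1; omega
  have hγp : γ ^ p = 1 := by
    rw [hγ, ← pow_mul, hpm, ← hβ, pow_orderOf_eq_one]
  have hγ1 : γ ≠ 1 := by
    intro h
    have hdvd : orderOf β ∣ p ^ (m - 1) := orderOf_dvd_of_pow_eq_one (hγ.symm.trans h)
    rw [hβ] at hdvd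
    have hle := Nat.le_of_dvd (by positivity) hdvd
    have hlt : p ^ (m - 1) < p ^ m := Nat.pow_lt_pow_right (by omega) (by omega)
    omega
  have hγmod : ∀ x : ℕ, γ ^ x = γ ^ (x % p) := by
    intro x
    conv_lhs => rw [← Nat.div_add_mod x p]
    rw [pow_add, pow_mul, hγp, one_pow, one_mul]
  -- order of g mod p
  have hg : orderOf (g : ZMod p) = p - 1 := by
    have h := hroot 1 le_rfl hm
    rwa [pow_one, Nat.totient_prime hp] at h
  have hgunit : IsUnit (g : ZMod p) := by
    apply IsUnit.of_pow_eq_one (n := p - 1)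
    · rw [← hg]; exact pow_orderOf_eq_one _
    · omega
  have hgcop : Nat.Coprime g p := (ZMod.isUnit_iff_coprime g p).mp hgunit
  -- the basic term function
  set T : ℕ → F := fun j => γ ^ (g ^ j % p) with hT
  have hterm : ∀ x : ℕ, γ ^ (g ^ x) = T x := fun x => hγmod (g ^ x)
  have hTmod : ∀ x y : ℕ, x % (p - 1) = y % (p - 1) → T x = T y := by
    intro x y hxy
    have key : ∀ z : ℕ, g ^ z % p = ((g : ZMod p) ^ (z % (p - 1))).val := by
      intro z
      have h1 : ((g ^ z : ℕ) : ZMod p) = (g : ZMod p) ^ (z % (p - 1)) := by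
        push_cast
        rw [← hg, pow_mod_orderOf]
      rw [← ZMod.val_natCast (n := p) (g ^ z), h1]
    simp only [hT, key, hxy]
  -- the shifting lemma for the inner sums
  have hS : ∀ (c u s : ℕ), Nat.Coprime s e →
      ∑ t ∈ Finset.range e, T (c + f * (u + s * t)) = ∑ t ∈ Finset.range e, T (c + f * t) := by
    intro c u s hs
    have hper : ∀ M : ℕ, T (c + f * M) = T (c + f * (M % e)) := by
      intro M
      apply hTmod
      conv_lhs => rw [← Nat.div_add_mod M e]
      have h2 : c + f * (e * (M / e) + M % e) = c + f * (M % e) + (e * f) * (M / e) := by ring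
      rw [h2, hef, Nat.add_mul_mod_self_left]
    set H : ZMod e → F := fun x => T (c + f * x.val) with hH
    have e1 : ∀ t : ℕ, T (c + f * (u + s * t))
        = H ((u : ZMod e) + (s : ZMod e) * (t : ZMod e)) := by
      intro t
      have hc : ((u : ZMod e) + (s : ZMod e) * (t : ZMod e)) = ((u + s * t : ℕ) : ZMod e) := by
        push_cast; ring
      simp only [hH, hc, ZMod.val_natCast]
      exact hper (u + s * t)
    have e2 : ∀ t : ℕ, T (c + f * t) = H ((t : ℕ) : ZMod e) := by
      intro t
      simp only [hH, ZMod.val_natCast]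
      exact hper t
    calc ∑ t ∈ Finset.range e, T (c + f * (u + s * t))
        = ∑ t ∈ Finset.range e, H ((u : ZMod e) + (s : ZMod e) * (t : ZMod e)) :=
          Finset.sum_congr rfl fun t _ => e1 t
      _ = ∑ x : ZMod e, H ((u : ZMod e) + (s : ZMod e) * x) :=
          sum_range_natCast_zmod e (fun x => H ((u : ZMod e) + (s : ZMod e) * x))
      _ = ∑ x : ZMod e, H x := sum_zmod_addMul e H u s hs
      _ = ∑ t ∈ Finset.range e, H ((t : ℕ) : ZMod e) := (sum_range_natCast_zmod e H).symm
      _ = ∑ t ∈ Finset.range e, T (c + f * t) := Finset.sum_congr rfl fun t _ => (e2 t).symm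
  -- shifting the full-period sum
  have hshift : ∀ c : ℕ, ∑ j ∈ Finset.range (p - 1), T (c + j)
      = ∑ j ∈ Finset.range (p - 1), T j := by
    intro c
    set H : ZMod (p - 1) → F := fun x => T x.val with hH
    have hTj : ∀ j : ℕ, T j = H ((j : ℕ) : ZMod (p - 1)) := by
      intro j
      simp only [hH, ZMod.val_natCast]
      exact hTmod j (j % (p - 1)) (by rw [Nat.mod_mod_of_dvd _ dvd_rfl])
    have e1 : ∀ j : ℕ, T (c + j) = H ((c : ZMod (p - 1)) + (j : ZMod (p - 1))) := by
      intro j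
      rw [hTj (c + j)]
      congr 1
      push_cast; ring
    calc ∑ j ∈ Finset.range (p - 1), T (c + j)
        = ∑ j ∈ Finset.range (p - 1), H ((c : ZMod (p - 1)) + (j : ZMod (p - 1))) :=
          Finset.sum_congr rfl fun j _ => e1 j
      _ = ∑ x : ZMod (p - 1), H ((c : ZMod (p - 1)) + x) :=
          sum_range_natCast_zmod _ (fun x => H ((c : ZMod (p - 1)) + x))
      _ = ∑ x : ZMod (p - 1), H x := by
          simpa using Equiv.sum_comp (Equiv.addLeft (c : ZMod (p - 1))) H
      _ = ∑ j ∈ Finset.range (p - 1), H ((j : ℕ) : ZMod (p - 1)) :=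
          (sum_range_natCast_zmod _ H).symm
      _ = ∑ j ∈ Finset.range (p - 1), T j := Finset.sum_congr rfl fun j _ => (hTj j).symm
  -- the full-period sum is 1
  have hgeom : ∑ y ∈ Finset.range p, γ ^ y = 0 := by
    have h := geom_sum_mul γ p
    rw [hγp, sub_self] at h
    rcases mul_eq_zero.mp h with h | h
    · exact h
    · exact absurd (sub_eq_zero.mp h) hγ1
  have hIco : ∑ y ∈ Finset.Ico 1 p, γ ^ y = 1 := by
    have h := Finset.sum_eq_sum_Ico_succ_bot (a := 0) (b := p) (by omega) (fun y => γ ^ y)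
    rw [← Finset.range_eq_Ico, hgeom, pow_zero, zero_add] at h
    have two : (2 : F) = 0 := CharP.cast_eq_zero F 2
    linear_combination h + (∑ y ∈ Finset.Ico 1 p, γ ^ y) * two
  have hmaps : ∀ j ∈ Finset.range (p - 1), g ^ j % p ∈ Finset.Ico 1 p := by
    intro j _
    simp only [Finset.mem_Ico]
    constructor
    · by_contra h
      push_neg at h
      have h0 : g ^ j % p = 0 := by omega
      have hdvd : p ∣ g ^ j := Nat.dvd_of_mod_eq_zero h0
      have hcp : Nat.Coprime (g ^ j) p := Nat.Coprime.pow_left _ hgcop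
      have : p ∣ Nat.gcd (g ^ j) p := Nat.dvd_gcd hdvd dvd_rfl
      rw [hcp] at this
      have := Nat.le_of_dvd one_pos this
      omega
    · exact Nat.mod_lt _ (by omega)
  have hinj : ∀ x ∈ Finset.range (p - 1), ∀ y ∈ Finset.range (p - 1),
      g ^ x % p = g ^ y % p → x = y := by
    intro x hx y hy hxy
    rw [Finset.mem_range] at hx hy
    have hx' : (g : ZMod p) ^ x = (g : ZMod p) ^ y := by
      have h1 : ((g ^ x : ℕ) : ZMod p) = ((g ^ y : ℕ) : ZMod p) := by
        rw [ZMod.natCast_eq_natCast_iff]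
        exact hxy
      push_cast at h1; exact h1
    obtain ⟨gu, hgc⟩ := hgunit
    have hgo : orderOf gu = p - 1 := by rw [← orderOf_units, hgc, hg]
    have hxu : gu ^ x = gu ^ y := by
      apply Units.ext
      rw [Units.val_pow_eq_pow_val, Units.val_pow_eq_pow_val, hgc, hx']
    have hmod := pow_eq_pow_iff_modEq.mp hxu
    rw [hgo] at hmod
    have : x % (p - 1) = y % (p - 1) := hmod
    rwa [Nat.mod_eq_of_lt hx, Nat.mod_eq_of_lt hy] at this
  have hbase : ∑ j ∈ Finset.range (p - 1), T j = 1 := by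
    have hcard : (Finset.Ico 1 p).card ≤ (Finset.range (p - 1)).card := by
      rw [Nat.card_Ico, Finset.card_range]
    have hbij : ∑ j ∈ Finset.range (p - 1), T j = ∑ y ∈ Finset.Ico 1 p, γ ^ y := by
      apply Finset.sum_nbij (fun j => g ^ j % p) hmaps
      · intro x hx y hy hxy
        exact hinj x (Finset.mem_coe.mp hx) y (Finset.mem_coe.mp hy) hxy
      · intro y hy
        obtain ⟨a', ha', hya⟩ := Finset.surj_on_of_inj_on_of_card_le
          (fun j (_ : j ∈ Finset.range (p - 1)) => g ^ j % p)
          (fun a' ha' => hmaps a' ha')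
          (fun a₁ a₂ h₁ h₂ h => hinj a₁ h₁ a₂ h₂ h)
          hcard y (Finset.mem_coe.mp hy)
        exact ⟨a', Finset.mem_coe.mpr ha', hya.symm⟩
      · intro j _; rfl
    rw [hbij, hIco]
  -- block sum equals 1
  have hψblock : ∑ i ∈ Finset.range f, ∑ t ∈ Finset.range e, T (b + k + i + f * t) = 1 := by
    have h1 : ∑ i ∈ Finset.range f, ∑ t ∈ Finset.range e, T (b + k + i + f * t)
        = ∑ i ∈ Finset.range f, ∑ t ∈ Finset.range e, T (b + k + (i + f * t)) := by
      refine Finset.sum_congr rfl fun i _ => Finset.sum_congr rfl fun t _ => ?_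
      rw [show b + k + i + f * t = b + k + (i + f * t) by ring]
    rw [h1, ← sum_range_mul_split (fun j => T (b + k + j)) f e,
      show f * e = p - 1 by rw [mul_comm]; exact hef.symm, hshift, hbase]
  -- coprimality
  have hcop : Nat.Coprime (p ^ l) e := by
    apply Nat.Coprime.pow_left
    rw [Nat.Prime.coprime_iff_not_dvd hp]
    intro hdvd
    have h1 := Nat.le_of_dvd he hdvd
    have h2 : e ≤ e * f := Nat.le_mul_of_pos_right e hfpos
    omega
  -- splitting the outer range
  obtain ⟨f2, hf2⟩ : ∃ f2, f = 2 * f2 := ⟨2 ^ (r - 1), by rw [hf, ← pow_succ']; congr 1; omega⟩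
  obtain ⟨Q, hQ⟩ : ∃ Q, p ^ l = 2 * Q + 1 := by
    rcases (hop.pow : Odd (p ^ l)) with ⟨Q, hQ⟩; exact ⟨Q, by omega⟩
  have hQ' : (p ^ l - 1) / 2 = Q := by omega
  have hsplit : p ^ l * f / 2 = Q * f + f / 2 := by
    rw [hf2, hQ, show (2 * Q + 1) * (2 * f2) = 2 * ((2 * Q + 1) * f2) by ring,
      Nat.mul_div_cancel_left _ (by norm_num), Nat.mul_div_cancel_left _ (by norm_num : 0 < 2)]
    ring
  -- rewriting the LHS terms
  have hLHS : ∀ i t : ℕ, β ^ (a * (p ^ (m - (l + 1)) * g ^ (b + i + p ^ l * f * t)))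
      = T (b + k + i + f * (p ^ (m - l - 1) * t₀ + p ^ l * t)) := by
    intro i t
    rw [ha]
    have h1 : m - (l + 1) = m - l - 1 := by omega
    have hexp : p ^ l * g ^ (k + p ^ (m - l - 1) * f * t₀)
          * (p ^ (m - (l + 1)) * g ^ (b + i + p ^ l * f * t))
        = p ^ (m - 1) * g ^ (b + k + i + f * (p ^ (m - l - 1) * t₀ + p ^ l * t)) := by
      rw [h1, mul_mul_mul_comm, ← pow_add, ← pow_add, show l + (m - l - 1) = m - 1 by omega]
      congr 1
      ring
    rw [hexp, pow_mul, ← hγ, hterm]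
  -- rewriting the RHS terms
  have hRHS : ∀ i t : ℕ, β ^ (p ^ (m - 1) * g ^ (b + k + i + f * t)) = T (b + k + i + f * t) := by
    intro i t
    rw [pow_mul, ← hγ, hterm]
  -- per-block shift invariance
  have hblockshift : ∀ q : ℕ, ∑ i ∈ Finset.range f, ∑ t ∈ Finset.range e,
      T (b + k + (q * f + i) + f * t) = 1 := by
    intro q
    have h1 : ∀ i : ℕ, ∑ t ∈ Finset.range e, T (b + k + (q * f + i) + f * t)
        = ∑ t ∈ Finset.range e, T (b + k + i + f * t) := by
      intro i
      have h2 : ∀ t : ℕ, b + k + (q * f + i) + f * t = b + k + i + f * (q + 1 * t) := by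
        intro t; ring
      calc ∑ t ∈ Finset.range e, T (b + k + (q * f + i) + f * t)
          = ∑ t ∈ Finset.range e, T (b + k + i + f * (q + 1 * t)) := by
            refine Finset.sum_congr rfl fun t _ => ?_; rw [h2 t]
        _ = ∑ t ∈ Finset.range e, T (b + k + i + f * t) := hS _ q 1 (Nat.coprime_one_left e)
    rw [Finset.sum_congr rfl fun i _ => h1 i, hψblock]
  -- the first Q*f terms
  have hfirst : ∀ q : ℕ, ∑ i ∈ Finset.range (q * f), ∑ t ∈ Finset.range e,
      T (b + k + i + f * t) = (q : F) := by
    intro q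
    induction q with
    | zero => simp
    | succ q ih =>
        rw [show (q + 1) * f = q * f + f by ring, Finset.sum_range_add, ih, hblockshift]
        push_cast; ring
  -- assemble
  calc ∑ i ∈ Finset.range (p ^ l * f / 2), ∑ t ∈ Finset.range e,
        β ^ (a * (p ^ (m - (l + 1)) * g ^ (b + i + p ^ l * f * t)))
      = ∑ i ∈ Finset.range (p ^ l * f / 2), ∑ t ∈ Finset.range e,
          T (b + k + i + f * (p ^ (m - l - 1) * t₀ + p ^ l * t)) := by
        exact Finset.sum_congr rfl fun i _ => Finset.sum_congr rfl fun t _ => hLHS i t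
    _ = ∑ i ∈ Finset.range (p ^ l * f / 2), ∑ t ∈ Finset.range e, T (b + k + i + f * t) := by
        exact Finset.sum_congr rfl fun i _ => hS (b + k + i) _ _ hcop
    _ = ∑ i ∈ Finset.range (Q * f), ∑ t ∈ Finset.range e, T (b + k + i + f * t)
        + ∑ i ∈ Finset.range (f / 2), ∑ t ∈ Finset.range e, T (b + k + (Q * f + i) + f * t) := by
        rw [hsplit, Finset.sum_range_add]
    _ = (Q : F) + ∑ i ∈ Finset.range (f / 2), ∑ t ∈ Finset.range e, T (b + k + i + f * t) := by
        rw [hfirst Q]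
        congr 1
        refine Finset.sum_congr rfl fun i _ => ?_
        calc ∑ t ∈ Finset.range e, T (b + k + (Q * f + i) + f * t)
            = ∑ t ∈ Finset.range e, T (b + k + i + f * (Q + 1 * t)) := by
              refine Finset.sum_congr rfl fun t _ => ?_
              rw [show b + k + (Q * f + i) + f * t = b + k + i + f * (Q + 1 * t) by ring]
          _ = ∑ t ∈ Finset.range e, T (b + k + i + f * t) := hS _ Q 1 (Nat.coprime_one_left e)
    _ = (((p ^ l - 1) / 2 : ℕ) : F) +
        ∑ i ∈ Finset.range (f / 2), ∑ t ∈ Finset.range e,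
          β ^ (p ^ (m - 1) * g ^ (b + k + i + f * t)) := by
        rw [hQ']
        congr 1
        exact Finset.sum_congr rfl fun i _ => Finset.sum_congr rfl fun t _ => (hRHS i t).symm
end

section
/- Let a ∈ p^l D_k^{(p^{m−l})} with 0 ≤ l ≤ m−1 and let j satisfy l+1 < j ≤ m. Then H̄_b^{(p^j)}(β^a) = H̄_{b+k}^{(p^{j−l})}(β) in GF(2^n). -/
open Finset

/-- Decompose a sum over `range (a * b)` by base-`a` digits. -/
private lemma sum_range_mul_decomp {M : Type*} [AddCommMonoid M] (F : ℕ → M) (a b : ℕ) :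
    ∑ x ∈ Finset.range (a * b), F x
      = ∑ q ∈ Finset.range b, ∑ i ∈ Finset.range a, F (i + a * q) := by
  induction b with
  | zero => simp
  | succ b ih =>
      rw [Nat.mul_succ, Finset.sum_range_add, ih, Finset.sum_range_succ]
      congr 1
      exact Finset.sum_congr rfl fun i _ => by rw [Nat.add_comm, Nat.mul_comm]

/-- Reindex a sum over `range n` by an affine map `t ↦ u * t + v` (mod `n`),
for a function `F` which is `n`-periodic and `u` coprime to `n`. -/
private lemma sum_range_affine {M : Type*} [AddCommMonoid M] (F : ℕ → M) (n u v : ℕ)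
    (hn : 0 < n) (hu : Nat.Coprime u n)
    (hF : ∀ x y, x ≡ y [MOD n] → F x = F y) :
    ∑ t ∈ Finset.range n, F (u * t + v) = ∑ t ∈ Finset.range n, F t := by
  have hφ : 1 ≤ Nat.totient n := Nat.totient_pos.mpr hn
  have huw : u * u ^ (Nat.totient n - 1) ≡ 1 [MOD n] := by
    have h := Nat.ModEq.pow_totient hu
    calc u * u ^ (Nat.totient n - 1) = u ^ Nat.totient n := by
          rw [← pow_succ']
          congr 1
          omega
      _ ≡ 1 [MOD n] := h
  set w := u ^ (Nat.totient n - 1) with hw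
  refine Finset.sum_bij (fun t _ => (u * t + v) % n)
    (fun t _ => Finset.mem_range.mpr (Nat.mod_lt _ hn)) ?_ ?_ ?_
  · intro t1 h1 t2 h2 heq
    have h3 : u * t1 + v ≡ u * t2 + v [MOD n] := heq
    have h4 : u * t1 ≡ u * t2 [MOD n] := Nat.ModEq.add_right_cancel' v h3
    have h5 : t1 ≡ t2 [MOD n] := Nat.ModEq.cancel_left_of_coprime hu.symm h4
    have h6 : t1 % n = t2 % n := h5
    rwa [Nat.mod_eq_of_lt (Finset.mem_range.mp h1),
      Nat.mod_eq_of_lt (Finset.mem_range.mp h2)] at h6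
  · intro y hy
    refine ⟨w * (y + (n - v % n)) % n, Finset.mem_range.mpr (Nat.mod_lt _ hn), ?_⟩
    have hvlt : v % n < n := Nat.mod_lt _ hn
    have hmain : u * (w * (y + (n - v % n)) % n) + v ≡ y [MOD n] := by
      calc u * (w * (y + (n - v % n)) % n) + v
          ≡ u * (w * (y + (n - v % n))) + v [MOD n] :=
            Nat.ModEq.add_right v (Nat.ModEq.mul_left u (Nat.mod_modEq _ _))
        _ = (u * w) * (y + (n - v % n)) + v := by ring
        _ ≡ 1 * (y + (n - v % n)) + v [MOD n] :=
            Nat.ModEq.add_right v (Nat.ModEq.mul_right _ huw)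
        _ = y + (n - v % n) + v := by ring
        _ ≡ y + (n - v % n) + v % n [MOD n] := Nat.ModEq.add_left _ (Nat.mod_modEq v n).symm
        _ = y + n := by omega
        _ ≡ y [MOD n] := Nat.add_mod_right y n
    have h2 : (u * (w * (y + (n - v % n)) % n) + v) % n = y % n := hmain
    rwa [Nat.mod_eq_of_lt (Finset.mem_range.mp hy)] at h2
  · intro t _
    exact hF _ _ (Nat.mod_modEq _ _).symm

/-- The sum of `β' ^ u` over all units `u` of `ZMod (p^s)` (enumerated as powers of a
primitive root `g`) vanishes, when `β'` has order `p ^ s` with `s ≥ 2`. -/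
private lemma sum_pow_gen_units {F : Type*} [Field F] (p s : ℕ) (hp : p.Prime)
    (hs : 2 ≤ s) (g : ℕ) (hg : orderOf ((g : ZMod (p ^ s))) = Nat.totient (p ^ s))
    (β' : F) (hβ' : orderOf β' = p ^ s) :
    ∑ c ∈ Finset.range (Nat.totient (p ^ s)), β' ^ g ^ c = 0 := by
  have hp1 : 1 < p := hp.one_lt
  have hp0 : 0 < p := by omega
  haveI : NeZero (p ^ s) := ⟨pow_ne_zero _ (by omega)⟩
  have hpspos : 0 < p ^ s := Nat.pow_pos hp0
  have hNpos : 0 < Nat.totient (p ^ s) := Nat.totient_pos.mpr hpspos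
  have hgu : IsUnit ((g : ZMod (p ^ s))) := by
    refine IsUnit.of_pow_eq_one (n := Nat.totient (p ^ s)) ?_ (by omega)
    rw [← hg]
    exact pow_orderOf_eq_one _
  have hgp : ¬ p ∣ g := by
    intro hdvd
    have hcop : Nat.Coprime g (p ^ s) := (ZMod.isUnit_iff_coprime g (p ^ s)).mp hgu
    have h1 : Nat.gcd g (p ^ s) = 1 := hcop
    have h2 : p ∣ Nat.gcd g (p ^ s) := Nat.dvd_gcd hdvd (dvd_pow_self p (by omega))
    rw [h1] at h2
    exact absurd (Nat.le_of_dvd one_pos h2) (by omega)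
  obtain ⟨gu, hgu_spec⟩ := hgu
  have hgu_ord : orderOf gu = Nat.totient (p ^ s) := by
    rw [← orderOf_units, hgu_spec, hg]
  have hinj : ∀ c1 < Nat.totient (p ^ s), ∀ c2 < Nat.totient (p ^ s),
      gu ^ c1 = gu ^ c2 → c1 = c2 := by
    intro c1 h1 c2 h2 heq
    have h3 := pow_eq_pow_iff_modEq.mp heq
    rw [hgu_ord] at h3
    have h4 : c1 % Nat.totient (p ^ s) = c2 % Nat.totient (p ^ s) := h3
    rwa [Nat.mod_eq_of_lt h1, Nat.mod_eq_of_lt h2] at h4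
  have hterm : ∀ c : ℕ, β' ^ g ^ c = β' ^ (g ^ c % p ^ s) := by
    intro c
    rw [← hβ', pow_mod_orderOf]
  have hbij : ∑ c ∈ Finset.range (Nat.totient (p ^ s)), β' ^ (g ^ c % p ^ s)
      = ∑ x ∈ (Finset.range (p ^ s)).filter (fun x => ¬ p ∣ x), β' ^ x := by
    refine Finset.sum_bij (fun c _ => g ^ c % p ^ s) ?_ ?_ ?_ ?_
    · intro c _
      refine Finset.mem_filter.mpr ⟨Finset.mem_range.mpr (Nat.mod_lt _ hpspos), ?_⟩
      intro hdvd
      have h1 : p ∣ g ^ c := (Nat.dvd_mod_iff (dvd_pow_self p (by omega))).mp hdvd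
      exact hgp (hp.dvd_of_dvd_pow h1)
    · intro c1 h1 c2 h2 heq
      have hz : ((g : ZMod (p ^ s))) ^ c1 = ((g : ZMod (p ^ s))) ^ c2 := by
        have hcast : ((g ^ c1 : ℕ) : ZMod (p ^ s)) = ((g ^ c2 : ℕ) : ZMod (p ^ s)) := by
          rw [ZMod.natCast_eq_natCast_iff]
          exact heq
        push_cast at hcast
        exact hcast
      have hzu : gu ^ c1 = gu ^ c2 := by
        apply Units.ext
        rw [Units.val_pow_eq_pow_val, Units.val_pow_eq_pow_val, hgu_spec]
        exact hz
      exact hinj c1 (Finset.mem_range.mp h1) c2 (Finset.mem_range.mp h2) hzu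
    · intro x hx
      obtain ⟨hxr, hxd⟩ := Finset.mem_filter.mp hx
      have hxlt := Finset.mem_range.mp hxr
      have hxu : IsUnit ((x : ZMod (p ^ s))) := by
        rw [ZMod.isUnit_iff_coprime]
        exact Nat.Coprime.pow_right _ ((hp.coprime_iff_not_dvd.mpr hxd).symm)
      obtain ⟨xu, hxu_spec⟩ := hxu
      have himg : (Finset.range (Nat.totient (p ^ s))).image (fun c => gu ^ c)
          = Finset.univ := by
        apply (Finset.card_eq_iff_eq_univ _).mp
        rw [Finset.card_image_of_injOn, Finset.card_range]
        · rw [ZMod.card_units_eq_totient]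
        · intro c1 h1 c2 h2 heq
          exact hinj c1 (Finset.mem_range.mp h1) c2 (Finset.mem_range.mp h2) heq
      have hmem : xu ∈ (Finset.range (Nat.totient (p ^ s))).image (fun c => gu ^ c) := by
        rw [himg]; exact Finset.mem_univ _
      obtain ⟨c, hc, hcx⟩ := Finset.mem_image.mp hmem
      refine ⟨c, hc, ?_⟩
      have hzeq : ((g ^ c : ℕ) : ZMod (p ^ s)) = ((x : ℕ) : ZMod (p ^ s)) := by
        push_cast
        rw [← hgu_spec, ← Units.val_pow_eq_pow_val, hcx, hxu_spec]
      rw [ZMod.natCast_eq_natCast_iff] at hzeq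
      have h4 : g ^ c % p ^ s = x % p ^ s := hzeq
      rwa [Nat.mod_eq_of_lt hxlt] at h4
    · intro c _
      rfl
  have hβ'ne1 : β' ≠ 1 := by
    intro h
    rw [h, orderOf_one] at hβ'
    have : p ^ s ≥ p ^ 2 := Nat.pow_le_pow_right hp0 hs
    have : p ^ 2 = p * p := sq p
    nlinarith [hβ'.symm]
  have htot : ∑ x ∈ Finset.range (p ^ s), β' ^ x = 0 := by
    rw [geom_sum_eq hβ'ne1, ← hβ', pow_orderOf_eq_one]
    simp
  have hppow : p * p ^ (s - 1) = p ^ s := by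
    rw [← pow_succ']
    congr 1
    omega
  have hβ'pne1 : β' ^ p ≠ 1 := by
    intro h
    have h1 : orderOf β' ∣ p := orderOf_dvd_of_pow_eq_one h
    rw [hβ'] at h1
    have h2 : p ^ s ≤ p := Nat.le_of_dvd hp0 h1
    have h3 : p ^ 1 ≤ p ^ s := Nat.pow_le_pow_right hp0 (by omega)
    have h4 : p ^ 2 ≤ p ^ s := Nat.pow_le_pow_right hp0 hs
    nlinarith [sq p]
  have hdvd0 : ∑ x ∈ (Finset.range (p ^ s)).filter (fun x => p ∣ x), β' ^ x = 0 := by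
    have hb2 : ∑ x ∈ (Finset.range (p ^ s)).filter (fun x => p ∣ x), β' ^ x
        = ∑ y ∈ Finset.range (p ^ (s - 1)), (β' ^ p) ^ y := by
      refine (Finset.sum_bij (fun y _ => p * y) ?_ ?_ ?_ ?_).symm
      · intro y hy
        refine Finset.mem_filter.mpr ⟨Finset.mem_range.mpr ?_, Dvd.intro _ rfl⟩
        calc p * y < p * p ^ (s - 1) :=
              (Nat.mul_lt_mul_left hp0).mpr (Finset.mem_range.mp hy)
          _ = p ^ s := hppow
      · intro y1 _ y2 _ h
        exact Nat.eq_of_mul_eq_mul_left hp0 h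
      · intro x hx
        obtain ⟨hxr, hxd⟩ := Finset.mem_filter.mp hx
        obtain ⟨y, rfl⟩ := hxd
        refine ⟨y, Finset.mem_range.mpr ?_, rfl⟩
        have h1 : p * y < p ^ s := Finset.mem_range.mp hxr
        rw [← hppow] at h1
        exact Nat.lt_of_mul_lt_mul_left h1
      · intro y _
        exact (pow_mul β' p y).symm
    rw [hb2, geom_sum_eq hβ'pne1]
    have h1 : (β' ^ p) ^ p ^ (s - 1) = 1 := by
      rw [← pow_mul, hppow, ← hβ', pow_orderOf_eq_one]
    rw [h1]
    simp
  have hsplit := Finset.sum_filter_add_sum_filter_not (Finset.range (p ^ s))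
    (fun x => p ∣ x) (fun x => β' ^ x)
  rw [htot, hdvd0, zero_add] at hsplit
  calc ∑ c ∈ Finset.range (Nat.totient (p ^ s)), β' ^ g ^ c
      = ∑ c ∈ Finset.range (Nat.totient (p ^ s)), β' ^ (g ^ c % p ^ s) :=
        Finset.sum_congr rfl fun c _ => hterm c
    _ = ∑ x ∈ (Finset.range (p ^ s)).filter (fun x => ¬ p ∣ x), β' ^ x := hbij
    _ = 0 := hsplit

/-- Lemma 2(3): for `a ∈ p^l D_k^{(p^{m-l})}` with `0 ≤ l ≤ m-1` and
`l + 1 < j ≤ m`, one has `H̄_b^{(p^j)}(β^a) = H̄_{b+k}^{(p^{j-l})}(β)`. -/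
theorem Hbar_eval_high_level (p m e f r g b l k t₀ : ℕ) (hp : p.Prime) (hop : Odd p)
    (hm : 1 ≤ m) (hr : 1 ≤ r) (hf : f = 2 ^ r) (he : 0 < e) (hef : p - 1 = e * f)
    (hroot : ∀ j, 1 ≤ j → j ≤ m → orderOf (g : ZMod (p ^ j)) = Nat.totient (p ^ j))
    (hl : l ≤ m - 1) (ht₀ : t₀ < e)
    {F : Type*} [Field F] (hchar : CharP F 2) (β : F) (hβ : orderOf β = p ^ m) :
    -- `a` is a representative of an element of `p^l D_k^{(p^{m-l})}`
    let a : ℕ := p ^ l * g ^ (k + p ^ (m - l - 1) * f * t₀)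
    ∀ j, l + 1 < j → j ≤ m →
      ∑ i ∈ Finset.range (p ^ (j - 1) * f / 2), ∑ t ∈ Finset.range e,
          β ^ (a * (p ^ (m - j) * g ^ (b + i + p ^ (j - 1) * f * t)))
        = ∑ i ∈ Finset.range (p ^ (j - l - 1) * f / 2), ∑ t ∈ Finset.range e,
            β ^ (p ^ (m - (j - l)) * g ^ (b + k + i + p ^ (j - l - 1) * f * t)) := by
  intro a j hjl hjm
  have ha : a = p ^ l * g ^ (k + p ^ (m - l - 1) * f * t₀) := rfl
  rw [ha]
  have hp1 : 1 < p := hp.one_lt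
  obtain ⟨r', rfl⟩ : ∃ r', r = r' + 1 := ⟨r - 1, by omega⟩
  have hf' : f = 2 * 2 ^ r' := by rw [hf, pow_succ']
  set s := j - l with hs
  have hs2 : 2 ≤ s := by omega
  have hsm : s ≤ m := by omega
  set δ := p ^ (s - 1) * 2 ^ r' with hδ
  have hδpos : 0 < δ := by
    rw [hδ]
    positivity
  -- numeric identities
  have e2 : p ^ (j - 1) * f = 2 * δ * p ^ l := by
    rw [hf', hδ, show j - 1 = l + (s - 1) by omega, pow_add]
    ring
  have e4 : p ^ (s - 1) * f = 2 * δ := by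
    rw [hf', hδ]
    ring
  have e1' : p ^ (j - 1) * f / 2 = δ * p ^ l := by
    rw [e2, show 2 * δ * p ^ l = δ * p ^ l * 2 by ring]
    exact Nat.mul_div_cancel _ (by norm_num)
  have e3' : p ^ (s - 1) * f / 2 = δ := by
    rw [e4, show 2 * δ = δ * 2 by ring]
    exact Nat.mul_div_cancel _ (by norm_num)
  have e5 : p ^ (m - l - 1) * f = 2 * δ * p ^ (m - j) := by
    rw [hf', hδ, show m - l - 1 = (s - 1) + (m - j) by omega, pow_add]
    ring
  have e6 : Nat.totient (p ^ s) = δ * (2 * e) := by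
    rw [Nat.totient_prime_pow hp (by omega : 0 < s), hef, hf', hδ]
    ring
  have e7 : (p : ℕ) ^ (m - s) = p ^ l * p ^ (m - j) := by
    rw [← pow_add]
    congr 1
    omega
  have hMpos : 0 < δ * (2 * e) := by positivity
  -- combining the two powers in the LHS term
  have hcomb : ∀ A E : ℕ, (p : ℕ) ^ l * g ^ A * (p ^ (m - j) * g ^ E)
      = p ^ (m - s) * g ^ (A + E) := by
    intro A E
    rw [pow_add, e7]
    ring
  -- the order of g mod p^s
  have hNg : orderOf ((g : ZMod (p ^ s))) = δ * (2 * e) := by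
    rw [hroot s (by omega) hsm, e6]
  -- periodicity of the base function
  have hBper : ∀ x y : ℕ, x ≡ y [MOD δ * (2 * e)] →
      β ^ (p ^ (m - s) * g ^ x) = β ^ (p ^ (m - s) * g ^ y) := by
    intro x y hxy
    have h1 : ((g : ZMod (p ^ s))) ^ x = ((g : ZMod (p ^ s))) ^ y := by
      calc ((g : ZMod (p ^ s))) ^ x
          = ((g : ZMod (p ^ s))) ^ (x % orderOf ((g : ZMod (p ^ s)))) :=
            (pow_mod_orderOf ..).symm
        _ = ((g : ZMod (p ^ s))) ^ (y % orderOf ((g : ZMod (p ^ s)))) := by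
            rw [hNg]
            exact congrArg _ hxy
        _ = ((g : ZMod (p ^ s))) ^ y := pow_mod_orderOf ..
    have h2 : (g : ℕ) ^ x ≡ g ^ y [MOD p ^ s] := by
      rw [← ZMod.natCast_eq_natCast_iff]
      push_cast
      exact h1
    have h3 := Nat.ModEq.mul_left' (c := p ^ (m - s)) h2
    rw [← pow_add, show m - s + s = m by omega] at h3
    calc β ^ (p ^ (m - s) * g ^ x)
        = β ^ (p ^ (m - s) * g ^ x % orderOf β) := (pow_mod_orderOf ..).symm
      _ = β ^ (p ^ (m - s) * g ^ y % orderOf β) := by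
          rw [hβ]
          exact congrArg _ h3
      _ = β ^ (p ^ (m - s) * g ^ y) := pow_mod_orderOf ..
  -- coprimality of p^l and e
  have hpe : ¬ p ∣ e := by
    intro hd
    have h1 : e ∣ p - 1 := ⟨f, hef⟩
    have h2 : e ≤ p - 1 := Nat.le_of_dvd (by omega) h1
    have h3 : p ≤ e := Nat.le_of_dvd he hd
    omega
  have hcop : Nat.Coprime (p ^ l) e :=
    Nat.Coprime.pow_left _ ((Nat.Prime.coprime_iff_not_dvd hp).mpr hpe)
  -- the order of β ^ (p ^ (m - s))
  have hβ'ord : orderOf (β ^ p ^ (m - s)) = p ^ s := by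
    rw [orderOf_pow' β (pow_ne_zero _ (by omega : p ≠ 0)), hβ,
      Nat.gcd_eq_right (pow_dvd_pow p (by omega : m - s ≤ m)),
      Nat.pow_div (by omega : m - s ≤ m) (by omega : 0 < p)]
    congr 1
    omega
  -- inner reindexing: for fixed q and i
  have hinner : ∀ q i : ℕ,
      (∑ t ∈ Finset.range e, β ^ (p ^ l * g ^ (k + p ^ (m - l - 1) * f * t₀) *
          (p ^ (m - j) * g ^ (b + (i + δ * q) + p ^ (j - 1) * f * t))))
      = ∑ t ∈ Finset.range e,
          β ^ (p ^ (m - s) * g ^ (b + k + i + δ * (q % 2) + 2 * δ * t)) := by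
    intro q i
    have hGper : ∀ x y : ℕ, x ≡ y [MOD e] →
        β ^ (p ^ (m - s) * g ^ (b + k + i + δ * (q % 2) + 2 * δ * x))
          = β ^ (p ^ (m - s) * g ^ (b + k + i + δ * (q % 2) + 2 * δ * y)) := by
      intro x y hxy
      apply hBper
      have h := Nat.ModEq.mul_left' (c := 2 * δ) hxy
      have h2 : 2 * δ * x ≡ 2 * δ * y [MOD δ * (2 * e)] := by
        rwa [show 2 * δ * e = δ * (2 * e) by ring] at h
      exact Nat.ModEq.add_left _ h2
    have haff := sum_range_affine
      (fun x => β ^ (p ^ (m - s) * g ^ (b + k + i + δ * (q % 2) + 2 * δ * x)))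
      e (p ^ l) (q / 2 + p ^ (m - j) * t₀) he hcop hGper
    rw [← haff]
    refine Finset.sum_congr rfl fun t _ => ?_
    rw [hcomb]
    refine congrArg (fun c : ℕ => β ^ (p ^ (m - s) * g ^ c)) ?_
    have hq : δ * q = 2 * δ * (q / 2) + δ * (q % 2) := by
      conv_lhs => rw [← Nat.div_add_mod q 2]
      ring
    rw [e5, e2, hq]
    ring
  -- the two half-sums add to zero
  have hWsum :
      (∑ i ∈ Finset.range δ, ∑ t ∈ Finset.range e,
          β ^ (p ^ (m - s) * g ^ (b + k + i + δ * 0 + 2 * δ * t)))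
      + (∑ i ∈ Finset.range δ, ∑ t ∈ Finset.range e,
          β ^ (p ^ (m - s) * g ^ (b + k + i + δ * 1 + 2 * δ * t))) = 0 := by
    have hA : ∑ c ∈ Finset.range (δ * (2 * e)), β ^ (p ^ (m - s) * g ^ (b + k + c))
        = (∑ i ∈ Finset.range δ, ∑ t ∈ Finset.range e,
            β ^ (p ^ (m - s) * g ^ (b + k + i + δ * 0 + 2 * δ * t)))
          + (∑ i ∈ Finset.range δ, ∑ t ∈ Finset.range e,
            β ^ (p ^ (m - s) * g ^ (b + k + i + δ * 1 + 2 * δ * t))) := by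
      calc ∑ c ∈ Finset.range (δ * (2 * e)), β ^ (p ^ (m - s) * g ^ (b + k + c))
          = ∑ w ∈ Finset.range (2 * e), ∑ i ∈ Finset.range δ,
              β ^ (p ^ (m - s) * g ^ (b + k + (i + δ * w))) :=
            sum_range_mul_decomp (fun c => β ^ (p ^ (m - s) * g ^ (b + k + c))) δ (2 * e)
        _ = ∑ t ∈ Finset.range e, ∑ ε ∈ Finset.range 2, ∑ i ∈ Finset.range δ,
              β ^ (p ^ (m - s) * g ^ (b + k + (i + δ * (ε + 2 * t)))) :=
            sum_range_mul_decomp (fun w => ∑ i ∈ Finset.range δ,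
              β ^ (p ^ (m - s) * g ^ (b + k + (i + δ * w)))) 2 e
        _ = ∑ t ∈ Finset.range e,
              ((∑ i ∈ Finset.range δ,
                  β ^ (p ^ (m - s) * g ^ (b + k + i + δ * 0 + 2 * δ * t)))
                + ∑ i ∈ Finset.range δ,
                  β ^ (p ^ (m - s) * g ^ (b + k + i + δ * 1 + 2 * δ * t))) := by
            refine Finset.sum_congr rfl fun t _ => ?_
            rw [Finset.sum_range_succ, Finset.sum_range_one]
            congr 1
            · exact Finset.sum_congr rfl fun i _ =>
                congrArg (fun c : ℕ => β ^ (p ^ (m - s) * g ^ c)) (by ring)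
            · exact Finset.sum_congr rfl fun i _ =>
                congrArg (fun c : ℕ => β ^ (p ^ (m - s) * g ^ c)) (by ring)
        _ = _ := by
            rw [Finset.sum_add_distrib]
            congr 1
            · exact Finset.sum_comm
            · exact Finset.sum_comm
    have hB0 : ∑ c ∈ Finset.range (δ * (2 * e)), β ^ (p ^ (m - s) * g ^ (b + k + c))
        = 0 := by
      have hshift : ∑ c ∈ Finset.range (δ * (2 * e)), β ^ (p ^ (m - s) * g ^ (b + k + c))
          = ∑ c ∈ Finset.range (δ * (2 * e)), β ^ (p ^ (m - s) * g ^ c) := by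
        have h := sum_range_affine (fun c => β ^ (p ^ (m - s) * g ^ c))
          (δ * (2 * e)) 1 (b + k) hMpos (Nat.coprime_one_left _) hBper
        rw [← h]
        exact Finset.sum_congr rfl fun c _ =>
          congrArg (fun c : ℕ => β ^ (p ^ (m - s) * g ^ c)) (by ring)
      rw [hshift, ← e6]
      calc ∑ c ∈ Finset.range (Nat.totient (p ^ s)), β ^ (p ^ (m - s) * g ^ c)
          = ∑ c ∈ Finset.range (Nat.totient (p ^ s)), (β ^ p ^ (m - s)) ^ g ^ c :=
            Finset.sum_congr rfl fun c _ => pow_mul β _ _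
        _ = 0 := sum_pow_gen_units p s hp hs2 g (hroot s (by omega) hsm) _ hβ'ord
    rw [← hA]
    exact hB0
  have hW01 :
      (∑ i ∈ Finset.range δ, ∑ t ∈ Finset.range e,
          β ^ (p ^ (m - s) * g ^ (b + k + i + δ * 1 + 2 * δ * t)))
      = ∑ i ∈ Finset.range δ, ∑ t ∈ Finset.range e,
          β ^ (p ^ (m - s) * g ^ (b + k + i + δ * 0 + 2 * δ * t)) := by
    have h := neg_eq_of_add_eq_zero_right hWsum
    rw [← h, CharTwo.neg_eq]
  -- main computation
  rw [e1', e3']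
  calc ∑ i ∈ Finset.range (δ * p ^ l), ∑ t ∈ Finset.range e,
        β ^ (p ^ l * g ^ (k + p ^ (m - l - 1) * f * t₀) *
          (p ^ (m - j) * g ^ (b + i + p ^ (j - 1) * f * t)))
      = ∑ q ∈ Finset.range (p ^ l), ∑ i ∈ Finset.range δ, ∑ t ∈ Finset.range e,
          β ^ (p ^ l * g ^ (k + p ^ (m - l - 1) * f * t₀) *
            (p ^ (m - j) * g ^ (b + (i + δ * q) + p ^ (j - 1) * f * t))) :=
        sum_range_mul_decomp (fun x => ∑ t ∈ Finset.range e,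
          β ^ (p ^ l * g ^ (k + p ^ (m - l - 1) * f * t₀) *
            (p ^ (m - j) * g ^ (b + x + p ^ (j - 1) * f * t)))) δ (p ^ l)
    _ = ∑ q ∈ Finset.range (p ^ l), ∑ i ∈ Finset.range δ, ∑ t ∈ Finset.range e,
          β ^ (p ^ (m - s) * g ^ (b + k + i + δ * (q % 2) + 2 * δ * t)) :=
        Finset.sum_congr rfl fun q _ => Finset.sum_congr rfl fun i _ => hinner q i
    _ = ∑ q ∈ Finset.range (p ^ l), ∑ i ∈ Finset.range δ, ∑ t ∈ Finset.range e,
          β ^ (p ^ (m - s) * g ^ (b + k + i + δ * 0 + 2 * δ * t)) := by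
        refine Finset.sum_congr rfl fun q _ => ?_
        rcases Nat.mod_two_eq_zero_or_one q with h | h
        · rw [h]
        · rw [h]
          exact hW01
    _ = (p ^ l) • (∑ i ∈ Finset.range δ, ∑ t ∈ Finset.range e,
          β ^ (p ^ (m - s) * g ^ (b + k + i + δ * 0 + 2 * δ * t))) := by
        rw [Finset.sum_const, Finset.card_range]
    _ = ∑ i ∈ Finset.range δ, ∑ t ∈ Finset.range e,
          β ^ (p ^ (m - s) * g ^ (b + k + i + δ * 0 + 2 * δ * t)) := by
        obtain ⟨c, hc⟩ : Odd (p ^ l) := hop.pow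
        rw [hc, add_nsmul, one_nsmul]
        have hz : (2 * c) • (∑ i ∈ Finset.range δ, ∑ t ∈ Finset.range e,
            β ^ (p ^ (m - s) * g ^ (b + k + i + δ * 0 + 2 * δ * t))) = 0 := by
          rw [two_mul, add_nsmul, CharTwo.add_self_eq_zero]
        rw [hz, zero_add]
    _ = ∑ i ∈ Finset.range δ, ∑ t ∈ Finset.range e,
          β ^ (p ^ (m - s) * g ^ (b + k + i + p ^ (s - 1) * f * t)) := by
        refine Finset.sum_congr rfl fun i _ => Finset.sum_congr rfl fun t _ => ?_
        refine congrArg (fun c : ℕ => β ^ (p ^ (m - s) * g ^ c)) ?_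
        rw [e4]
        ring
end

section
/- Suppose 2 ∈ D_h^{(p^m)} with f ∤ h (equivalently 2^e ≢ 1 mod p). Then A_v ∉ F_2 for every v. -/
private lemma sum_range_shift {M : Type*} [AddCommGroup M] (f : ℕ → M) (n : ℕ)
    (hper : ∀ t, f (t + n) = f t) (c : ℕ) :
    ∑ t ∈ Finset.range n, f (t + c) = ∑ t ∈ Finset.range n, f t := by
  induction c with
  | zero => simp
  | succ c ih =>
    have h1 : ∑ t ∈ Finset.range n, f (t + (c + 1)) = ∑ t ∈ Finset.range n, f ((t + 1) + c) :=
      Finset.sum_congr rfl fun t _ => by rw [show t + (c + 1) = (t + 1) + c by omega]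
    have h2 : ∑ t ∈ Finset.range n, f ((t + 1) + c) + f (0 + c)
        = ∑ t ∈ Finset.range n, f (t + c) + f (n + c) := by
      rw [← Finset.sum_range_succ' (fun t => f (t + c)) n, Finset.sum_range_succ]
    have h3 : f (n + c) = f (0 + c) := by rw [show n + c = (0 + c) + n by omega, hper]
    rw [h3] at h2
    rw [h1]
    exact (add_right_cancel h2).trans ih

private lemma sum_rect {M : Type*} [AddCommMonoid M] (f : ℕ → M) (P : ℕ) :
    ∀ e : ℕ, ∑ t ∈ Finset.range e, ∑ i ∈ Finset.range P, f (i + P * t)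
      = ∑ x ∈ Finset.range (P * e), f x
  | 0 => by simp
  | (e + 1) => by
    rw [Finset.sum_range_succ, sum_rect f P e, Nat.mul_succ, Finset.sum_range_add]
    congr 1
    exact Finset.sum_congr rfl fun i _ => by rw [Nat.add_comm]

private lemma geom_zero {F : Type*} [Field F] {γ : F} (h1 : γ ≠ 1) {n : ℕ} (hn : γ ^ n = 1) :
    ∑ x ∈ Finset.range n, γ ^ x = 0 := by
  rw [geom_sum_eq h1, hn, sub_self, zero_div]

theorem A_aux (p m e f r g h : ℕ) (hp : p.Prime) (hop : Odd p)
    (hm : 1 ≤ m) (hr : 1 ≤ r) (hf : f = 2 ^ r) (he : 0 < e) (hef : p - 1 = e * f)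
    (hroot : ∀ j, 1 ≤ j → j ≤ m → orderOf (g : ZMod (p ^ j)) = Nat.totient (p ^ j))
    (h2 : ∃ t < e, (2 : ZMod (p ^ m)) = (g : ZMod (p ^ m)) ^ (h + p ^ (m - 1) * f * t))
    (hh : ¬ f ∣ h)
    {F : Type*} [Field F] (hchar : CharP F 2) (β : F) (hβ : orderOf β = p ^ m)
    (A : ℕ → F)
    (hA : ∀ v, A v = ∑ s ∈ Finset.Icc 1 m,
      ∑ i ∈ Finset.range (p ^ (s - 1) * f / 2), ∑ t ∈ Finset.range e,
        β ^ (p ^ (m - s) * g ^ (v + i + p ^ (s - 1) * f * t))) :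
    ∀ v : ℕ, (A v) ^ 2 ≠ A v := by
  haveI := hchar
  haveI : Fact (Nat.Prime 2) := ⟨Nat.prime_two⟩
  have hp0 : 0 < p := hp.pos
  have hp1 : 1 < p := hp.one_lt
  -- basic: β ^ X = β ^ Y from congruence mod p^m
  have powβ : ∀ {X Y : ℕ}, X ≡ Y [MOD p ^ m] → β ^ X = β ^ Y := by
    intro X Y hXY
    rw [← pow_mod_orderOf β X, ← pow_mod_orderOf β Y, hβ]
    exact congrArg (β ^ ·) hXY
  have congβ : ∀ s, 1 ≤ s → s ≤ m → ∀ {X Y : ℕ}, X ≡ Y [MOD p ^ s] →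
      β ^ (p ^ (m - s) * X) = β ^ (p ^ (m - s) * Y) := by
    intro s h1 h2 X Y hXY
    apply powβ
    have := hXY.mul_left' (c := p ^ (m - s))
    rwa [← pow_add, show m - s + s = m by omega] at this
  -- order of g modulo p^s
  have ordg : ∀ s, 1 ≤ s → s ≤ m →
      orderOf ((g : ℕ) : ZMod (p ^ s)) = p ^ (s - 1) * f * e := by
    intro s h1 h2
    rw [hroot s h1 h2, Nat.totient_prime_pow hp h1, hef]
    ring
  have gE : ∀ s, 1 ≤ s → s ≤ m → g ^ (p ^ (s - 1) * f * e) ≡ 1 [MOD p ^ s] := by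
    intro s h1 h2
    have hone : ((g : ℕ) : ZMod (p ^ s)) ^ (p ^ (s - 1) * f * e) = 1 := by
      rw [← ordg s h1 h2]; exact pow_orderOf_eq_one _
    have : ((g ^ (p ^ (s - 1) * f * e) : ℕ) : ZMod (p ^ s)) = ((1 : ℕ) : ZMod (p ^ s)) := by
      push_cast
      rw [hone]
    exact (ZMod.natCast_eq_natCast_iff _ _ _).mp this
  have gper : ∀ s, 1 ≤ s → s ≤ m → ∀ w c : ℕ,
      g ^ (w + p ^ (s - 1) * f * e * c) ≡ g ^ w [MOD p ^ s] := by
    intro s h1 h2 w c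
    have h4 := (gE s h1 h2).pow c
    have h5 := h4.mul_left (g ^ w)
    calc g ^ (w + p ^ (s - 1) * f * e * c)
        = g ^ w * (g ^ (p ^ (s - 1) * f * e)) ^ c := by rw [← pow_mul, ← pow_add]
      _ ≡ g ^ w * 1 ^ c [MOD p ^ s] := h5
      _ = g ^ w := by rw [one_pow, mul_one]
  -- t-shift invariance
  have tshift : ∀ s, 1 ≤ s → s ≤ m → ∀ w c : ℕ,
      ∑ t ∈ Finset.range e, β ^ (p ^ (m - s) * g ^ (w + p ^ (s - 1) * f * (t + c)))
        = ∑ t ∈ Finset.range e, β ^ (p ^ (m - s) * g ^ (w + p ^ (s - 1) * f * t)) := by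
    intro s h1 h2 w c
    refine sum_range_shift (fun t => β ^ (p ^ (m - s) * g ^ (w + p ^ (s - 1) * f * t))) e ?_ c
    intro t
    show β ^ (p ^ (m - s) * g ^ (w + p ^ (s - 1) * f * (t + e))) = _
    have harg : w + p ^ (s - 1) * f * (t + e)
        = (w + p ^ (s - 1) * f * t) + p ^ (s - 1) * f * e * 1 := by ring
    rw [harg]
    exact congβ s h1 h2 (gper s h1 h2 (w + p ^ (s - 1) * f * t) 1)
  -- g is not divisible by p
  have hs3 : 3 ≤ p := by obtain ⟨k, hk⟩ := hop; omega
  have hpg : ¬ p ∣ g := by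
    intro hd
    have h1 := hroot 1 le_rfl hm
    have hg0 : ((g : ℕ) : ZMod (p ^ 1)) = 0 := by
      rw [ZMod.natCast_eq_zero_iff]
      simpa using hd
    have hpos : 0 < Nat.totient (p ^ 1) := Nat.totient_pos.mpr (by positivity)
    have hzo := pow_orderOf_eq_one ((g : ℕ) : ZMod (p ^ 1))
    rw [hg0] at h1
    rw [hg0, h1, zero_pow (by omega)] at hzo
    haveI : Fact (1 < p ^ 1) := ⟨by simpa using hp.one_lt⟩
    exact zero_ne_one hzo
  -- Frobenius: squaring shifts by h
  obtain ⟨t₀, ht₀e, h2eq⟩ := h2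
  have hg2 : (2 : ℕ) ≡ g ^ (h + p ^ (m - 1) * f * t₀) [MOD p ^ m] := by
    apply (ZMod.natCast_eq_natCast_iff _ _ _).mp
    push_cast
    exact h2eq
  have hFro : ∀ w, (A w) ^ 2 = A (w + h) := by
    intro w
    rw [hA, hA, sum_pow_char]
    refine Finset.sum_congr rfl fun s hs => ?_
    obtain ⟨h1, h2'⟩ := Finset.mem_Icc.mp hs
    rw [sum_pow_char]
    refine Finset.sum_congr rfl fun i _ => ?_
    rw [sum_pow_char]
    have key : ∀ t : ℕ, (β ^ (p ^ (m - s) * g ^ (w + i + p ^ (s - 1) * f * t))) ^ 2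
        = β ^ (p ^ (m - s) * g ^ ((w + h + i) + p ^ (s - 1) * f * (t + p ^ (m - s) * t₀))) := by
      intro t
      rw [← pow_mul]
      have e1 : p ^ (m - s) * g ^ (w + i + p ^ (s - 1) * f * t) * 2
          = p ^ (m - s) * (2 * g ^ (w + i + p ^ (s - 1) * f * t)) := by ring
      rw [e1]
      apply congβ s h1 h2'
      have e2 : (2 : ℕ) ≡ g ^ (h + p ^ (m - 1) * f * t₀) [MOD p ^ s] :=
        hg2.of_dvd (pow_dvd_pow p h2')
      have e3 := e2.mul_right (g ^ (w + i + p ^ (s - 1) * f * t))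
      have e4 : g ^ (h + p ^ (m - 1) * f * t₀) * g ^ (w + i + p ^ (s - 1) * f * t)
          = g ^ ((w + h + i) + p ^ (s - 1) * f * (t + p ^ (m - s) * t₀)) := by
        rw [← pow_add]
        congr 1
        have hsplit : p ^ (m - 1) = p ^ (s - 1) * p ^ (m - s) := by
          rw [← pow_add]; congr 1; omega
        rw [hsplit]; ring
      exact e4 ▸ e3
    calc ∑ t ∈ Finset.range e, (β ^ (p ^ (m - s) * g ^ (w + i + p ^ (s - 1) * f * t))) ^ 2
        = ∑ t ∈ Finset.range e,
            β ^ (p ^ (m - s) * g ^ ((w + h + i) + p ^ (s - 1) * f * (t + p ^ (m - s) * t₀))) :=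
          Finset.sum_congr rfl fun t _ => key t
      _ = ∑ t ∈ Finset.range e,
            β ^ (p ^ (m - s) * g ^ ((w + h + i) + p ^ (s - 1) * f * t)) := tshift s h1 h2' _ _
      _ = ∑ t ∈ Finset.range e,
            β ^ (p ^ (m - s) * g ^ (w + h + i + p ^ (s - 1) * f * t)) := rfl
  -- periodicity
  have hPer : ∀ w c, A (w + p ^ (m - 1) * f * c) = A w := by
    intro w c
    rw [hA, hA]
    refine Finset.sum_congr rfl fun s hs => ?_
    obtain ⟨h1, h2'⟩ := Finset.mem_Icc.mp hs
    refine Finset.sum_congr rfl fun i _ => ?_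
    have hsplit : p ^ (m - 1) = p ^ (s - 1) * p ^ (m - s) := by
      rw [← pow_add]; congr 1; omega
    calc ∑ t ∈ Finset.range e,
          β ^ (p ^ (m - s) * g ^ (w + p ^ (m - 1) * f * c + i + p ^ (s - 1) * f * t))
        = ∑ t ∈ Finset.range e,
            β ^ (p ^ (m - s) * g ^ ((w + i) + p ^ (s - 1) * f * (t + p ^ (m - s) * c))) := by
          refine Finset.sum_congr rfl fun t _ => ?_
          have harg : w + p ^ (m - 1) * f * c + i + p ^ (s - 1) * f * t
              = (w + i) + p ^ (s - 1) * f * (t + p ^ (m - s) * c) := by rw [hsplit]; ring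
          rw [harg]
      _ = ∑ t ∈ Finset.range e,
            β ^ (p ^ (m - s) * g ^ ((w + i) + p ^ (s - 1) * f * t)) := tshift s h1 h2' _ _
      _ = ∑ t ∈ Finset.range e,
            β ^ (p ^ (m - s) * g ^ (w + i + p ^ (s - 1) * f * t)) := rfl
  have hfpos : 0 < f := by rw [hf]; positivity
  -- the full-circle sum evaluation
  have Usum : ∀ s, 1 ≤ s → s ≤ m → ∀ w : ℕ,
      ∑ x ∈ Finset.range (p ^ (s - 1) * f * e), β ^ (p ^ (m - s) * g ^ (w + x))
        = if s = 1 then (1 : F) else 0 := by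
    intro s h1 h2 w
    have hNpos : 0 < p ^ (s - 1) * f * e := by positivity
    have hpspos : 0 < p ^ s := by positivity
    have hγord : orderOf (β ^ (p ^ (m - s))) = p ^ s := by
      rw [orderOf_pow' β (by positivity : p ^ (m - s) ≠ 0), hβ,
        Nat.gcd_eq_right (pow_dvd_pow p (by omega : m - s ≤ m)),
        Nat.pow_div (by omega) hp0]
      congr 1; omega
    set γ : F := β ^ (p ^ (m - s)) with hγdef
    have hγ1 : γ ≠ 1 := by
      intro hg1
      rw [hg1, orderOf_one] at hγord
      have : 1 < p ^ s := Nat.one_lt_pow (by omega) hp1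
      omega
    have hγps : γ ^ (p ^ s) = 1 := by rw [← hγord]; exact pow_orderOf_eq_one γ
    -- injectivity of x ↦ g^(w+x) % p^s on range N
    have hinj : ∀ x ∈ Finset.range (p ^ (s - 1) * f * e),
        ∀ y ∈ Finset.range (p ^ (s - 1) * f * e),
        g ^ (w + x) % p ^ s = g ^ (w + y) % p ^ s → x = y := by
      intro x hx y hy hxy
      have hmod : g ^ (w + x) ≡ g ^ (w + y) [MOD p ^ s] := hxy
      have hz : ((g : ℕ) : ZMod (p ^ s)) ^ (w + x) = ((g : ℕ) : ZMod (p ^ s)) ^ (w + y) := by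
        have hcast := (ZMod.natCast_eq_natCast_iff _ _ _).mpr hmod
        push_cast at hcast
        exact hcast
      have hgu : IsUnit ((g : ℕ) : ZMod (p ^ s)) := by
        apply IsUnit.of_mul_eq_one (((g : ℕ) : ZMod (p ^ s)) ^ (p ^ (s - 1) * f * e - 1))
        rw [← pow_succ', show p ^ (s - 1) * f * e - 1 + 1 = p ^ (s - 1) * f * e by omega,
          ← ordg s h1 h2]
        exact pow_orderOf_eq_one _
      obtain ⟨u, hu⟩ := hgu
      have huord : orderOf u = p ^ (s - 1) * f * e := by
        rw [← orderOf_units, hu]; exact ordg s h1 h2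
      have hup : u ^ (w + x) = u ^ (w + y) := by
        apply Units.ext
        rw [Units.val_pow_eq_pow_val, Units.val_pow_eq_pow_val, hu]
        exact hz
      have hme := pow_eq_pow_iff_modEq.mp hup
      rw [huord] at hme
      have hxy' := Nat.ModEq.add_left_cancel' w hme
      simp only [Finset.mem_range] at hx hy
      have hfin : x % (p ^ (s - 1) * f * e) = y % (p ^ (s - 1) * f * e) := hxy'
      rwa [Nat.mod_eq_of_lt hx, Nat.mod_eq_of_lt hy] at hfin
    -- the image is exactly the reduced residues
    have himg : (Finset.range (p ^ (s - 1) * f * e)).image (fun x => g ^ (w + x) % p ^ s)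
        = (Finset.range (p ^ s)).filter (fun y => ¬ p ∣ y) := by
      apply Finset.eq_of_subset_of_card_le
      · intro y hy
        simp only [Finset.mem_image, Finset.mem_range] at hy
        obtain ⟨x, hx, rfl⟩ := hy
        simp only [Finset.mem_filter, Finset.mem_range]
        refine ⟨Nat.mod_lt _ hpspos, fun hdvd => ?_⟩
        have : p ∣ g ^ (w + x) :=
          (Nat.dvd_mod_iff (dvd_pow_self p (by omega : s ≠ 0))).mp hdvd
        exact hpg (hp.dvd_of_dvd_pow this)
      · have hcard1 : ((Finset.range (p ^ (s - 1) * f * e)).image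
            (fun x => g ^ (w + x) % p ^ s)).card = p ^ (s - 1) * f * e := by
          rw [Finset.card_image_of_injOn
            (fun x hx y hy hxy => hinj x (by simpa using hx) y (by simpa using hy) hxy),
            Finset.card_range]
        have hcard2 : ((Finset.range (p ^ s)).filter (fun y => ¬ p ∣ y)).card
            = p ^ (s - 1) * f * e := by
          have hfc : (Finset.range (p ^ s)).filter (fun y => ¬ p ∣ y)
              = (Finset.range (p ^ s)).filter ((p ^ s).Coprime) := by
            apply Finset.filter_congr
            intro y _
            rw [Nat.coprime_pow_left_iff (by omega : 0 < s), hp.coprime_iff_not_dvd]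
          rw [hfc, ← Nat.totient_eq_card_coprime, Nat.totient_prime_pow hp h1, hef]
          ring
        rw [hcard1, hcard2]
    -- rewrite the sum through the image
    have step1 : ∑ x ∈ Finset.range (p ^ (s - 1) * f * e), β ^ (p ^ (m - s) * g ^ (w + x))
        = ∑ y ∈ (Finset.range (p ^ s)).filter (fun y => ¬ p ∣ y), γ ^ y := by
      rw [← himg, Finset.sum_image hinj]
      refine Finset.sum_congr rfl fun x _ => ?_
      rw [pow_mul]
      rw [← hγord]
      exact (pow_mod_orderOf γ _).symm
    rw [step1]
    -- evaluate the reduced-residue sum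
    have hsplitsum := Finset.sum_filter_add_sum_filter_not (Finset.range (p ^ s))
      (fun y => p ∣ y) (fun y => γ ^ y)
    have htot : ∑ y ∈ Finset.range (p ^ s), γ ^ y = 0 := geom_zero hγ1 hγps
    have hps' : p ^ s = p * p ^ (s - 1) := by
      rw [← pow_succ']; congr 1; omega
    have himg2 : (Finset.range (p ^ (s - 1))).image (fun j => p * j)
        = (Finset.range (p ^ s)).filter (fun y => p ∣ y) := by
      ext y
      simp only [Finset.mem_image, Finset.mem_filter, Finset.mem_range]
      constructor
      · rintro ⟨j, hj, rfl⟩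
        exact ⟨by rw [hps']; exact (mul_lt_mul_iff_right₀ hp0).mpr hj, Dvd.intro j rfl⟩
      · rintro ⟨hy, j, rfl⟩
        refine ⟨j, ?_, rfl⟩
        rw [hps'] at hy
        exact lt_of_mul_lt_mul_left hy (Nat.zero_le p)
      
    have hmul : ∑ y ∈ (Finset.range (p ^ s)).filter (fun y => p ∣ y), γ ^ y
        = ∑ j ∈ Finset.range (p ^ (s - 1)), (γ ^ p) ^ j := by
      rw [← himg2, Finset.sum_image (fun x _ y _ hxy => Nat.eq_of_mul_eq_mul_left hp0 hxy)]
      exact Finset.sum_congr rfl fun j _ => pow_mul γ p j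
    rw [htot, hmul] at hsplitsum
    by_cases hs1 : s = 1
    · subst hs1
      rw [if_pos rfl]
      rw [show p ^ (1 - 1) = 1 by norm_num, Finset.sum_range_one, pow_zero] at hsplitsum
      have := eq_neg_of_add_eq_zero_right hsplitsum
      rwa [CharTwo.neg_eq] at this
    · rw [if_neg hs1]
      have hγp1 : γ ^ p ≠ 1 := by
        intro hone
        have hdd := orderOf_dvd_of_pow_eq_one hone
        rw [hγord] at hdd
        have h11 : p ^ s ∣ p ^ 1 := by rwa [pow_one]
        have hsle := (Nat.pow_dvd_pow_iff_le_right hp1).mp h11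
        omega
      have hγpp : (γ ^ p) ^ (p ^ (s - 1)) = 1 := by
        rw [← pow_mul, show p * p ^ (s - 1) = p ^ s from hps'.symm, hγps]
      rw [geom_zero hγp1 hγpp, zero_add] at hsplitsum
      exact hsplitsum
  have hf2 : f = 2 * 2 ^ (r - 1) := by
    rw [hf, ← pow_succ']
    congr 1; omega
  have hδ : p ^ (m - 1) * f / 2 = p ^ (m - 1) * 2 ^ (r - 1) := by
    rw [hf2, show p ^ (m - 1) * (2 * 2 ^ (r - 1)) = 2 * (p ^ (m - 1) * 2 ^ (r - 1)) by ring,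
      Nat.mul_div_cancel_left _ (by norm_num)]
  -- Lemma 4 : shifting by δ adds 1
  have hDel : ∀ w, A (w + p ^ (m - 1) * f / 2) = A w + 1 := by
    intro w
    have key : A w + A (w + p ^ (m - 1) * f / 2) = 1 := by
      rw [hA, hA, ← Finset.sum_add_distrib]
      have hlevel : ∀ s ∈ Finset.Icc 1 m,
          ((∑ i ∈ Finset.range (p ^ (s - 1) * f / 2), ∑ t ∈ Finset.range e,
              β ^ (p ^ (m - s) * g ^ (w + i + p ^ (s - 1) * f * t)))
            + ∑ i ∈ Finset.range (p ^ (s - 1) * f / 2), ∑ t ∈ Finset.range e,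
              β ^ (p ^ (m - s) * g ^ ((w + p ^ (m - 1) * f / 2) + i + p ^ (s - 1) * f * t)))
          = if s = 1 then (1 : F) else 0 := by
        intro s hs
        obtain ⟨h1, h2'⟩ := Finset.mem_Icc.mp hs
        have hrange : p ^ (s - 1) * f / 2 = p ^ (s - 1) * 2 ^ (r - 1) := by
          rw [hf2, show p ^ (s - 1) * (2 * 2 ^ (r - 1)) = 2 * (p ^ (s - 1) * 2 ^ (r - 1)) by ring,
            Nat.mul_div_cancel_left _ (by norm_num)]
        obtain ⟨k, hk⟩ : ∃ k, p ^ (m - s) = 2 * k + 1 := hop.pow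
        have hsplit : p ^ (m - 1) = p ^ (s - 1) * p ^ (m - s) := by
          rw [← pow_add]; congr 1; omega
        have hsecond : ∀ i : ℕ,
            (∑ t ∈ Finset.range e,
              β ^ (p ^ (m - s) * g ^ ((w + p ^ (m - 1) * f / 2) + i + p ^ (s - 1) * f * t)))
            = ∑ t ∈ Finset.range e,
              β ^ (p ^ (m - s) * g ^ ((w + (p ^ (s - 1) * 2 ^ (r - 1) + i)) + p ^ (s - 1) * f * t)) := by
          intro i
          calc (∑ t ∈ Finset.range e,
                β ^ (p ^ (m - s) * g ^ ((w + p ^ (m - 1) * f / 2) + i + p ^ (s - 1) * f * t)))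
              = ∑ t ∈ Finset.range e, β ^ (p ^ (m - s) *
                  g ^ ((w + (p ^ (s - 1) * 2 ^ (r - 1) + i)) + p ^ (s - 1) * f * (t + k))) := by
                refine Finset.sum_congr rfl fun t _ => ?_
                have harg : (w + p ^ (m - 1) * f / 2) + i + p ^ (s - 1) * f * t
                    = (w + (p ^ (s - 1) * 2 ^ (r - 1) + i)) + p ^ (s - 1) * f * (t + k) := by
                  rw [hδ, hsplit, hk, hf2]
                  ring
                rw [harg]
            _ = _ := tshift s h1 h2' _ k
        rw [hrange]
        calc ((∑ i ∈ Finset.range (p ^ (s - 1) * 2 ^ (r - 1)), ∑ t ∈ Finset.range e,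
                β ^ (p ^ (m - s) * g ^ (w + i + p ^ (s - 1) * f * t)))
              + ∑ i ∈ Finset.range (p ^ (s - 1) * 2 ^ (r - 1)), ∑ t ∈ Finset.range e,
                β ^ (p ^ (m - s) * g ^ ((w + p ^ (m - 1) * f / 2) + i + p ^ (s - 1) * f * t)))
            = (∑ i ∈ Finset.range (p ^ (s - 1) * 2 ^ (r - 1)), ∑ t ∈ Finset.range e,
                β ^ (p ^ (m - s) * g ^ (w + i + p ^ (s - 1) * f * t)))
              + ∑ i ∈ Finset.range (p ^ (s - 1) * 2 ^ (r - 1)), ∑ t ∈ Finset.range e,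
                β ^ (p ^ (m - s) * g ^ (w + (p ^ (s - 1) * 2 ^ (r - 1) + i) + p ^ (s - 1) * f * t)) := by
              rw [Finset.sum_congr rfl fun i _ => hsecond i]
          _ = ∑ i ∈ Finset.range (p ^ (s - 1) * 2 ^ (r - 1) + p ^ (s - 1) * 2 ^ (r - 1)),
                ∑ t ∈ Finset.range e, β ^ (p ^ (m - s) * g ^ (w + i + p ^ (s - 1) * f * t)) :=
              (Finset.sum_range_add (fun i => ∑ t ∈ Finset.range e,
                β ^ (p ^ (m - s) * g ^ (w + i + p ^ (s - 1) * f * t))) _ _).symm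
          _ = ∑ i ∈ Finset.range (p ^ (s - 1) * f), ∑ t ∈ Finset.range e,
                β ^ (p ^ (m - s) * g ^ (w + i + p ^ (s - 1) * f * t)) := by
              congr 1
              rw [hf2]; ring_nf
          _ = ∑ t ∈ Finset.range e, ∑ i ∈ Finset.range (p ^ (s - 1) * f),
                β ^ (p ^ (m - s) * g ^ (w + (i + p ^ (s - 1) * f * t))) := by
              rw [Finset.sum_comm]
              exact Finset.sum_congr rfl fun i _ => Finset.sum_congr rfl fun t _ => by
                rw [add_assoc]
          _ = ∑ x ∈ Finset.range (p ^ (s - 1) * f * e),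
                β ^ (p ^ (m - s) * g ^ (w + x)) :=
              sum_rect (fun x => β ^ (p ^ (m - s) * g ^ (w + x))) (p ^ (s - 1) * f) e
          _ = if s = 1 then (1 : F) else 0 := Usum s h1 h2' w
      rw [Finset.sum_congr rfl hlevel, Finset.sum_ite_eq' (Finset.Icc 1 m) 1 (fun _ => (1 : F))]
      simp [hm]
    rw [← key, ← add_assoc, CharTwo.add_self_eq_zero, zero_add]
  -- conclusion
  intro v hAv
  have hall : ∀ n : ℕ, A (v + n * h) = A v := by
    intro n
    induction n with
    | zero => simp
    | succ n ih =>
      have harg : v + (n + 1) * h = (v + n * h) + h := by ring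
      rw [harg, ← hFro, ih, hAv]
  have hh0 : h ≠ 0 := fun h0 => hh (h0 ▸ dvd_zero f)
  obtain ⟨c0, h', hodd2, hfac⟩ : ∃ c0 h', ¬ 2 ∣ h' ∧ h = 2 ^ c0 * h' :=
    ⟨h.factorization 2, h / 2 ^ h.factorization 2,
      Nat.not_dvd_ordCompl Nat.prime_two hh0,
      (Nat.ordProj_mul_ordCompl_eq_self h 2).symm⟩
  have hcr : c0 < r := by
    by_contra hge
    push_neg at hge
    exact hh (hf ▸ (pow_dvd_pow 2 hge).trans ⟨h', hfac⟩)
  obtain ⟨q, hq⟩ : ∃ q, h' = 2 * q + 1 := ⟨h' / 2, by omega⟩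
  have hkey : v + (2 ^ (r - 1 - c0) * p ^ (m - 1)) * h
      = (v + p ^ (m - 1) * f / 2) + p ^ (m - 1) * f * q := by
    rw [hδ, hfac, hq,
      show (2:ℕ) ^ (r - 1 - c0) * p ^ (m - 1) * (2 ^ c0 * (2 * q + 1))
        = (2 ^ (r - 1 - c0) * 2 ^ c0) * (p ^ (m - 1) * (2 * q + 1)) by ring,
      ← pow_add, show r - 1 - c0 + c0 = r - 1 by omega, hf2]
    ring
  have hfin := hall (2 ^ (r - 1 - c0) * p ^ (m - 1))
  rw [hkey, hPer, hDel] at hfin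
  exact one_ne_zero (add_eq_left.mp hfin)

/-- Proposition 2(1), second half: if `2 ∈ D_h^{(p^m)}` with `f ∤ h`
(equivalently `2^e ≢ 1 (mod p)`), then `A_v ∉ F₂` for every `v`,
i.e. `A_v² ≠ A_v`. -/
theorem A_not_mem_F2 (p m e f r g h : ℕ) (hp : p.Prime) (hop : Odd p)
    (hm : 1 ≤ m) (hr : 1 ≤ r) (hf : f = 2 ^ r) (he : 0 < e) (hef : p - 1 = e * f)
    (hroot : ∀ j, 1 ≤ j → j ≤ m → orderOf (g : ZMod (p ^ j)) = Nat.totient (p ^ j))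
    (h2 : ∃ t < e, (2 : ZMod (p ^ m)) = (g : ZMod (p ^ m)) ^ (h + p ^ (m - 1) * f * t))
    (hh : ¬ f ∣ h)
    {F : Type*} [Field F] (hchar : CharP F 2) (β : F) (hβ : orderOf β = p ^ m) :
    let A : ℕ → F := fun v => ∑ s ∈ Finset.Icc 1 m,
      ∑ i ∈ Finset.range (p ^ (s - 1) * f / 2), ∑ t ∈ Finset.range e,
        β ^ (p ^ (m - s) * g ^ (v + i + p ^ (s - 1) * f * t))
    ∀ v : ℕ, (A v) ^ 2 ≠ A v := by
  intro A
  exact A_aux p m e f r g h hp hop hm hr hf he hef hroot h2 hh hchar β hβ A fun v => rfl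
end

section
/- Suppose 2 ∈ D_h^{(p^m)} with δ_1 = f/2 ∤ h. Then A_v ∉ F_4 for every v. -/
open Finset

private lemma aux_sum_shift_one {M : Type*} [AddCommGroup M] (f : ℕ → M) (n : ℕ)
    (hfn : f n = f 0) : ∑ t ∈ range n, f (t + 1) = ∑ t ∈ range n, f t := by
  have h1 := Finset.sum_range_succ' f n
  have h2 := Finset.sum_range_succ f n
  rw [h2, hfn] at h1
  exact add_right_cancel h1.symm

private lemma aux_sum_shift {M : Type*} [AddCommGroup M] (f : ℕ → M) (n : ℕ)
    (hper : ∀ x, f (x + n) = f x) (v : ℕ) :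
    ∑ j ∈ range n, f (v + j) = ∑ j ∈ range n, f j := by
  induction v with
  | zero => simp
  | succ v ih =>
    have : ∑ j ∈ range n, f (v + 1 + j) = ∑ j ∈ range n, (fun j => f (v + j)) (j + 1) := by
      apply Finset.sum_congr rfl; intro j _; simp only []; ring_nf
    rw [this, aux_sum_shift_one (fun j => f (v + j)) n (by simpa using hper v)]
    exact ih

private lemma aux_sum_mul {M : Type*} [AddCommGroup M] (f : ℕ → M) (a b : ℕ) :
    ∑ j ∈ range (a * b), f j = ∑ t ∈ range a, ∑ i ∈ range b, f (b * t + i) := by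
  induction a with
  | zero => simp
  | succ a ih =>
    rw [Nat.succ_mul, Finset.sum_range_add, ih, Finset.sum_range_succ]
    congr 1
    apply Finset.sum_congr rfl; intro i _; ring_nf

private lemma pow_congr_of_modEq {F : Type*} [Monoid F] (β : F) (n : ℕ) (h1 : β ^ n = 1)
    {a b : ℕ} (hab : a ≡ b [MOD n]) : β ^ a = β ^ b := by
  rcases le_total b a with hle | hle
  · obtain ⟨k, hk⟩ := (Nat.modEq_iff_dvd' hle).mp hab.symm
    have : a = b + n * k := by omega
    rw [this, pow_add, pow_mul, h1, one_pow, mul_one]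
  · obtain ⟨k, hk⟩ := (Nat.modEq_iff_dvd' hle).mp hab
    have : b = a + n * k := by omega
    rw [this, pow_add, pow_mul, h1, one_pow, mul_one]

private lemma beta_congr (p m s : ℕ) {F : Type*} [Field F] (β : F) (hβ : orderOf β = p ^ m)
    (hs : s ≤ m) {a b : ℕ} (hab : a ≡ b [MOD p ^ s]) :
    β ^ (p ^ (m - s) * a) = β ^ (p ^ (m - s) * b) := by
  have h1 : β ^ (p ^ m) = 1 := by rw [← hβ]; exact pow_orderOf_eq_one β
  have h2 := Nat.ModEq.mul_left' (c := p ^ (m - s)) hab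
  rw [← pow_add, Nat.sub_add_cancel hs] at h2
  exact pow_congr_of_modEq β (p ^ m) h1 h2

private lemma g_period (g M n x : ℕ) (h1 : (g : ZMod M) ^ n = 1) :
    g ^ (x + n) ≡ g ^ x [MOD M] := by
  have : ((g ^ (x + n) : ℕ) : ZMod M) = ((g ^ x : ℕ) : ZMod M) := by
    push_cast; rw [pow_add, h1, mul_one]
  exact (ZMod.natCast_eq_natCast_iff _ _ _).mp this

private def Xf (p m e f g : ℕ) {F : Type*} [Field F] (β : F) (s : ℕ) : ℕ → F :=
  fun u => ∑ t ∈ Finset.range e, β ^ (p ^ (m - s) * g ^ (u + p ^ (s - 1) * f * t))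

private def Af (p m e f g : ℕ) {F : Type*} [Field F] (β : F) : ℕ → F :=
  fun v => ∑ s ∈ Finset.Icc 1 m, ∑ i ∈ Finset.range (p ^ (s - 1) * f / 2),
    Xf p m e f g β s (v + i)

private lemma X_per (p m e f g : ℕ) {F : Type*} [Field F] (β : F) (hβ : orderOf β = p ^ m)
    (s : ℕ) (hsm : s ≤ m) (g1 : (g : ZMod (p ^ s)) ^ (p ^ (s - 1) * f * e) = 1) :
    ∀ k u, Xf p m e f g β s (u + p ^ (s - 1) * f * k) = Xf p m e f g β s u := by
  have hone : ∀ u, Xf p m e f g β s (u + p ^ (s - 1) * f) = Xf p m e f g β s u := by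
    intro u
    have h0 : ∀ t, β ^ (p ^ (m - s) * g ^ (u + p ^ (s - 1) * f + p ^ (s - 1) * f * t))
        = (fun t => β ^ (p ^ (m - s) * g ^ (u + p ^ (s - 1) * f * t))) (t + 1) := by
      intro t; simp only []; congr 2; ring
    unfold Xf
    rw [Finset.sum_congr rfl (fun t _ => h0 t)]
    refine aux_sum_shift_one (fun t => β ^ (p ^ (m - s) * g ^ (u + p ^ (s - 1) * f * t))) e ?_
    simp only [mul_zero, add_zero]
    exact beta_congr p m s β hβ hsm (g_period g (p ^ s) (p ^ (s - 1) * f * e) u g1)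
  intro k
  induction k with
  | zero => simp
  | succ k ih =>
    intro u
    have hh : u + p ^ (s - 1) * f * (k + 1) = (u + p ^ (s - 1) * f * k) + p ^ (s - 1) * f := by
      ring
    rw [hh, hone, ih]

private lemma A_per (p m e f g : ℕ) {F : Type*} [Field F] (β : F) (hβ : orderOf β = p ^ m)
    (hm : 1 ≤ m)
    (g1 : ∀ s, 1 ≤ s → s ≤ m → (g : ZMod (p ^ s)) ^ (p ^ (s - 1) * f * e) = 1) :
    ∀ k v, Af p m e f g β (v + p ^ (m - 1) * f * k) = Af p m e f g β v := by
  intro k v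
  unfold Af
  apply Finset.sum_congr rfl
  intro s hs
  rw [Finset.mem_Icc] at hs
  apply Finset.sum_congr rfl
  intro i _
  have key : v + p ^ (m - 1) * f * k + i = (v + i) + p ^ (s - 1) * f * (p ^ (m - s) * k) := by
    have : p ^ (s - 1) * p ^ (m - s) = p ^ (m - 1) := by
      rw [← pow_add]; congr 1; omega
    calc v + p ^ (m - 1) * f * k + i
        = (v + i) + (p ^ (s - 1) * p ^ (m - s)) * f * k := by rw [this]; ring
      _ = (v + i) + p ^ (s - 1) * f * (p ^ (m - s) * k) := by ring
  rw [key, X_per p m e f g β hβ s hs.2 (g1 s hs.1 hs.2)]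

private lemma geo_eq_zero (p m k : ℕ) (hp : 1 < p) {F : Type*} [Field F] (β : F)
    (hβ : orderOf β = p ^ m) (hk1 : 1 ≤ k) (hkm : k ≤ m) :
    ∑ a ∈ range (p ^ k), β ^ (p ^ (m - k) * a) = 0 := by
  have hx1 : β ^ p ^ (m - k) ≠ 1 := by
    intro hcon
    have h1 := orderOf_dvd_of_pow_eq_one hcon
    rw [hβ] at h1
    have := (Nat.pow_dvd_pow_iff_le_right hp).mp h1
    omega
  have hxn : (β ^ p ^ (m - k)) ^ p ^ k = 1 := by
    rw [← pow_mul, ← pow_add]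
    have hmk : m - k + k = m := by omega
    rw [hmk, ← hβ]; exact pow_orderOf_eq_one β
  have hsum : (∑ a ∈ range (p ^ k), (β ^ p ^ (m - k)) ^ a) * (β ^ p ^ (m - k) - 1) = 0 := by
    rw [geom_sum_mul, hxn, sub_self]
  have h2 : β ^ p ^ (m - k) - 1 ≠ 0 := sub_ne_zero.mpr hx1
  have h3 := (mul_eq_zero.mp hsum).resolve_right h2
  calc ∑ a ∈ range (p ^ k), β ^ (p ^ (m - k) * a)
      = ∑ a ∈ range (p ^ k), (β ^ p ^ (m - k)) ^ a :=
        Finset.sum_congr rfl (fun a _ => pow_mul β _ a)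
    _ = 0 := h3

private lemma Tlev_eq (p m e f g : ℕ) (hp : p.Prime) {F : Type*} [Field F] (hchar : CharP F 2)
    (β : F) (hβ : orderOf β = p ^ m) (he : 0 < e) (hf0 : 0 < f) (hef : p - 1 = e * f)
    (s : ℕ) (hs1 : 1 ≤ s) (hsm : s ≤ m)
    (hord : orderOf (g : ZMod (p ^ s)) = p ^ (s - 1) * f * e) (v : ℕ) :
    ∑ i ∈ range (p ^ (s - 1) * f), Xf p m e f g β s (v + i) = if s = 1 then 1 else 0 := by
  haveI : Fact p.Prime := ⟨hp⟩
  set n := e * (p ^ (s - 1) * f) with hn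
  have hn' : p ^ (s - 1) * f * e = n := by rw [hn]; ring
  have hp1 : 1 < p := hp.one_lt
  have hnpos : 0 < n := by have : 0 < p ^ (s - 1) := by positivity
                           positivity
  have hps0 : 0 < p ^ s := by positivity
  have hg1 : (g : ZMod (p ^ s)) ^ n = 1 := by
    have h0 := pow_orderOf_eq_one (g : ZMod (p ^ s))
    rwa [hord, hn'] at h0
  have htot : Nat.totient (p ^ s) = n := by
    rw [Nat.totient_prime_pow hp hs1, hef, hn]; ring
  -- step 1: double sum to single sum
  have step1 : ∑ i ∈ range (p ^ (s - 1) * f), Xf p m e f g β s (v + i)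
      = ∑ j ∈ range n, β ^ (p ^ (m - s) * g ^ (v + j)) := by
    rw [hn, aux_sum_mul (fun j => β ^ (p ^ (m - s) * g ^ (v + j))) e (p ^ (s - 1) * f)]
    unfold Xf
    rw [Finset.sum_comm]
    apply Finset.sum_congr rfl; intro t _
    apply Finset.sum_congr rfl; intro i _
    congr 2
    ring
  -- step 2: kill the shift v
  have hper : ∀ x : ℕ, β ^ (p ^ (m - s) * g ^ (x + n)) = β ^ (p ^ (m - s) * g ^ x) := fun x =>
    beta_congr p m s β hβ hsm (g_period g (p ^ s) n x hg1)
  have step2 : ∑ j ∈ range n, β ^ (p ^ (m - s) * g ^ (v + j))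
      = ∑ j ∈ range n, β ^ (p ^ (m - s) * g ^ j) :=
    aux_sum_shift (fun j => β ^ (p ^ (m - s) * g ^ j)) n hper v
  -- injectivity of j ↦ g^j % p^s on range n
  have hinj : Set.InjOn (fun j => g ^ j % p ^ s) ↑(range n) := by
    intro j1 h1 j2 hh2 hj
    simp only [Finset.coe_range, Set.mem_Iio] at h1 hh2
    have hc : ((g : ZMod (p ^ s))) ^ j1 = ((g : ZMod (p ^ s))) ^ j2 := by
      have e1 : (((g ^ j1 % p ^ s : ℕ)) : ZMod (p ^ s))
          = ((g ^ j2 % p ^ s : ℕ) : ZMod (p ^ s)) :=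
        congrArg (fun x : ℕ => (x : ZMod (p ^ s))) hj
      rwa [ZMod.natCast_mod, ZMod.natCast_mod, Nat.cast_pow, Nat.cast_pow] at e1
    have hu : IsUnit ((g : ZMod (p ^ s))) := by
      apply IsUnit.of_mul_eq_one ((g : ZMod (p ^ s)) ^ (n - 1))
      rw [← pow_succ']
      have hn1 : n - 1 + 1 = n := by omega
      rw [hn1, hg1]
    have hcu : hu.unit ^ j1 = hu.unit ^ j2 := by
      ext; simpa using hc
    have hmod := pow_eq_pow_iff_modEq.mp hcu
    rw [← orderOf_units, IsUnit.unit_spec, hord, hn'] at hmod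
    unfold Nat.ModEq at hmod
    rwa [Nat.mod_eq_of_lt h1, Nat.mod_eq_of_lt hh2] at hmod
  -- the map lands in the non-multiples of p
  have hmaps : ∀ j ∈ range n, g ^ j % p ^ s ∈ (range (p ^ s)).filter (fun a => ¬ p ∣ a) := by
    intro j _
    rw [Finset.mem_filter, Finset.mem_range]
    refine ⟨Nat.mod_lt _ hps0, ?_⟩
    intro hdvd
    have hdg : p ∣ g ^ j := by
      have hdp : p ∣ p ^ s * (g ^ j / p ^ s) :=
        Dvd.dvd.mul_right (dvd_pow_self p (by omega)) _
      have hsum2 : p ∣ p ^ s * (g ^ j / p ^ s) + g ^ j % p ^ s := dvd_add hdp hdvd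
      rwa [Nat.div_add_mod] at hsum2
    have hpg : p ∣ g := hp.dvd_of_dvd_pow hdg
    have hg0 : (g : ZMod p) = 0 := (ZMod.natCast_eq_zero_iff g p).mpr hpg
    have hcast : ((g : ZMod p)) ^ n = 1 := by
      have hmap := congrArg (ZMod.castHom (dvd_pow_self p (by omega : s ≠ 0)) (ZMod p)) hg1
      rwa [map_pow, map_natCast, map_one] at hmap
    rw [hg0, zero_pow (by omega : n ≠ 0)] at hcast
    exact zero_ne_one hcast
  -- the image equals the filter set
  have himg : (range n).image (fun j => g ^ j % p ^ s)
      = (range (p ^ s)).filter (fun a => ¬ p ∣ a) := by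
    apply Finset.eq_of_subset_of_card_le
    · intro a ha
      rw [Finset.mem_image] at ha
      obtain ⟨j, hj, rfl⟩ := ha
      exact hmaps j hj
    · have hcard1 : ((range n).image (fun j => g ^ j % p ^ s)).card = n := by
        rw [Finset.card_image_of_injOn hinj, Finset.card_range]
      have hfilter : (range (p ^ s)).filter (fun a => (p ^ s).Coprime a)
          = (range (p ^ s)).filter (fun a => ¬ p ∣ a) := by
        apply Finset.filter_congr
        intro a _
        rw [Nat.coprime_pow_left_iff (by omega : 0 < s)]
        exact hp.coprime_iff_not_dvd
      have hcard2 : ((range (p ^ s)).filter (fun a => ¬ p ∣ a)).card = n := by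
        rw [← hfilter, ← Nat.totient_eq_card_coprime, htot]
      omega
  -- sum over non-multiples of p equals our sum
  have hunits : ∑ a ∈ (range (p ^ s)).filter (fun a => ¬ p ∣ a), β ^ (p ^ (m - s) * a)
      = ∑ j ∈ range n, β ^ (p ^ (m - s) * g ^ j) := by
    rw [← himg, Finset.sum_image (fun x hx y hy hxy => hinj hx hy hxy)]
    exact Finset.sum_congr rfl
      (fun j _ => beta_congr p m s β hβ hsm (Nat.mod_modEq (g ^ j) (p ^ s)))
  -- sum over multiples of p
  have hmultset : (range (p ^ s)).filter (fun a => p ∣ a)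
      = (range (p ^ (s - 1))).image (fun b => p * b) := by
    have hps : p ^ s = p * p ^ (s - 1) := by
      rw [← pow_succ']
      congr 1
      omega
    ext a
    rw [Finset.mem_filter, Finset.mem_range, Finset.mem_image]
    constructor
    · rintro ⟨hlt, b, rfl⟩
      refine ⟨b, ?_, rfl⟩
      rw [Finset.mem_range]
      rw [hps] at hlt
      exact lt_of_mul_lt_mul_left hlt (by omega)
    · rintro ⟨b, hb, rfl⟩
      rw [Finset.mem_range] at hb
      refine ⟨?_, Dvd.intro b rfl⟩
      rw [hps]
      exact (mul_lt_mul_iff_right₀ (by omega : 0 < p)).mpr hb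
  have hmult : ∑ a ∈ (range (p ^ s)).filter (fun a => p ∣ a), β ^ (p ^ (m - s) * a)
      = ∑ b ∈ range (p ^ (s - 1)), β ^ (p ^ (m - (s - 1)) * b) := by
    rw [hmultset, Finset.sum_image (fun x _ y _ hxy => by
      exact Nat.eq_of_mul_eq_mul_left (by omega) hxy)]
    apply Finset.sum_congr rfl
    intro b _
    congr 1
    have : p ^ (m - s) * p = p ^ (m - (s - 1)) := by
      rw [← pow_succ]
      congr 1
      omega
    calc p ^ (m - s) * (p * b) = p ^ (m - s) * p * b := by ring
      _ = p ^ (m - (s - 1)) * b := by rw [this]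
  -- split the geometric sum
  have hsplit := Finset.sum_filter_add_sum_filter_not (range (p ^ s)) (fun a => p ∣ a)
    (fun a => β ^ (p ^ (m - s) * a))
  have hgeo : ∑ a ∈ range (p ^ s), β ^ (p ^ (m - s) * a) = 0 :=
    geo_eq_zero p m s hp1 β hβ hs1 hsm
  rw [hgeo, hmult, hunits] at hsplit
  have hfinal : ∑ j ∈ range n, β ^ (p ^ (m - s) * g ^ j)
      = ∑ b ∈ range (p ^ (s - 1)), β ^ (p ^ (m - (s - 1)) * b) :=
    (eq_neg_of_add_eq_zero_right hsplit).trans (CharTwo.neg_eq _)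
  rw [step1, step2, hfinal]
  by_cases hs : s = 1
  · subst hs
    simp
  · rw [if_neg hs]
    exact geo_eq_zero p m (s - 1) hp1 β hβ (by omega) (by omega)

private lemma A_delta (p m e f g : ℕ) (hp : p.Prime) (hop : Odd p) {F : Type*} [Field F]
    (hchar : CharP F 2) (β : F) (hβ : orderOf β = p ^ m) (hm : 1 ≤ m)
    (he : 0 < e) (hf2 : f = 2 * (f / 2)) (hf0 : 0 < f) (hef : p - 1 = e * f)
    (hord : ∀ s, 1 ≤ s → s ≤ m → orderOf (g : ZMod (p ^ s)) = p ^ (s - 1) * f * e)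
    (v : ℕ) : Af p m e f g β (v + p ^ (m - 1) * (f / 2)) = Af p m e f g β v + 1 := by
  have hg1 : ∀ s, 1 ≤ s → s ≤ m → (g : ZMod (p ^ s)) ^ (p ^ (s - 1) * f * e) = 1 := by
    intro s hs1 hsm
    have h0 := pow_orderOf_eq_one (g : ZMod (p ^ s))
    rwa [hord s hs1 hsm] at h0
  have key : Af p m e f g β v + Af p m e f g β (v + p ^ (m - 1) * (f / 2)) = 1 := by
    unfold Af
    rw [← Finset.sum_add_distrib]
    have hlev : ∀ s ∈ Finset.Icc 1 m,
        ((∑ i ∈ range (p ^ (s - 1) * f / 2), Xf p m e f g β s (v + i)) +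
          ∑ i ∈ range (p ^ (s - 1) * f / 2), Xf p m e f g β s (v + p ^ (m - 1) * (f / 2) + i))
        = if s = 1 then 1 else 0 := by
      intro s hs
      rw [Finset.mem_Icc] at hs
      obtain ⟨hs1, hsm⟩ := hs
      set H := p ^ (s - 1) * (f / 2) with hH
      have hrange : p ^ (s - 1) * f / 2 = H := by
        rw [hH]
        exact Nat.mul_div_assoc _ ⟨f / 2, hf2⟩
      have hHL : H + H = p ^ (s - 1) * f := by
        rw [hH, ← Nat.mul_add]
        congr 1
        omega
      obtain ⟨k, hk⟩ : ∃ k, p ^ (m - s) = 2 * k + 1 := by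
        have hodd : Odd (p ^ (m - s)) := hop.pow
        obtain ⟨k, hk⟩ := hodd
        exact ⟨k, by omega⟩
      have hpm : p ^ (m - 1) = p ^ (s - 1) * p ^ (m - s) := by
        rw [← pow_add]; congr 1; omega
      have hshift : p ^ (m - 1) * (f / 2) = H + p ^ (s - 1) * f * k := by
        calc p ^ (m - 1) * (f / 2) = p ^ (s - 1) * (f / 2) * (2 * k + 1) := by
              rw [hpm, hk]; ring
          _ = H + (H + H) * k := by rw [hH]; ring
          _ = H + p ^ (s - 1) * f * k := by rw [hHL]
      have hsecond : ∑ i ∈ range (p ^ (s - 1) * f / 2),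
            Xf p m e f g β s (v + p ^ (m - 1) * (f / 2) + i)
          = ∑ i ∈ range (p ^ (s - 1) * f / 2), Xf p m e f g β s (v + H + i) := by
        apply Finset.sum_congr rfl
        intro i _
        rw [show v + p ^ (m - 1) * (f / 2) + i = (v + H + i) + p ^ (s - 1) * f * k from by
          rw [hshift]; ring]
        exact X_per p m e f g β hβ s hsm (hg1 s hs1 hsm) k (v + H + i)
      rw [hsecond, hrange]
      have hcomb : (∑ i ∈ range H, Xf p m e f g β s (v + i)) +
            ∑ i ∈ range H, Xf p m e f g β s (v + H + i)
          = ∑ i ∈ range (p ^ (s - 1) * f), Xf p m e f g β s (v + i) := by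
        rw [← hHL, Finset.sum_range_add]
        congr 1
        apply Finset.sum_congr rfl
        intro i _
        rw [add_assoc]
      rw [hcomb]
      exact Tlev_eq p m e f g hp hchar β hβ he hf0 hef s hs1 hsm (hord s hs1 hsm) v
    rw [Finset.sum_congr rfl hlev]
    rw [Finset.sum_ite_eq' (Finset.Icc 1 m) 1 (fun _ => (1 : F))]
    rw [if_pos (by rw [Finset.mem_Icc]; omega)]
  calc Af p m e f g β (v + p ^ (m - 1) * (f / 2))
      = Af p m e f g β v + (Af p m e f g β v + Af p m e f g β (v + p ^ (m - 1) * (f / 2))) := by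
        rw [← add_assoc, CharTwo.add_self_eq_zero, zero_add]
    _ = Af p m e f g β v + 1 := by rw [key]

private lemma A_sq (p m e f g h : ℕ) (hp : p.Prime) {F : Type*} [Field F]
    (hchar : CharP F 2) (β : F) (hβ : orderOf β = p ^ m) (hm : 1 ≤ m)
    (h2 : ∃ t < e, (2 : ZMod (p ^ m)) = (g : ZMod (p ^ m)) ^ (h + p ^ (m - 1) * f * t))
    (hg1 : ∀ s, 1 ≤ s → s ≤ m → (g : ZMod (p ^ s)) ^ (p ^ (s - 1) * f * e) = 1)
    (v : ℕ) : Af p m e f g β v ^ 2 = Af p m e f g β (v + h) := by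
  haveI : Fact (Nat.Prime 2) := ⟨Nat.prime_two⟩
  obtain ⟨t₀, ht₀, heq⟩ := h2
  set h' := h + p ^ (m - 1) * f * t₀ with hh'
  have h2nat : (2 : ℕ) ≡ g ^ h' [MOD p ^ m] := by
    rw [← ZMod.natCast_eq_natCast_iff]
    push_cast
    exact heq
  have hfrob : Af p m e f g β v ^ 2 = Af p m e f g β (v + h') := by
    unfold Af Xf
    rw [sum_pow_char 2]
    apply Finset.sum_congr rfl
    intro s hs
    rw [Finset.mem_Icc] at hs
    obtain ⟨hs1, hsm⟩ := hs
    rw [sum_pow_char 2]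
    apply Finset.sum_congr rfl
    intro i _
    rw [sum_pow_char 2]
    apply Finset.sum_congr rfl
    intro t _
    have h2s : (2 : ℕ) ≡ g ^ h' [MOD p ^ s] :=
      Nat.ModEq.of_dvd (pow_dvd_pow p hsm) h2nat
    have hcong : g ^ (v + i + p ^ (s - 1) * f * t) * 2
        ≡ g ^ (v + h' + i + p ^ (s - 1) * f * t) [MOD p ^ s] := by
      have := (Nat.ModEq.mul_left (g ^ (v + i + p ^ (s - 1) * f * t)) h2s)
      calc g ^ (v + i + p ^ (s - 1) * f * t) * 2
          ≡ g ^ (v + i + p ^ (s - 1) * f * t) * g ^ h' [MOD p ^ s] := this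
        _ = g ^ (v + h' + i + p ^ (s - 1) * f * t) := by rw [← pow_add]; congr 1; ring
    calc (β ^ (p ^ (m - s) * g ^ (v + i + p ^ (s - 1) * f * t))) ^ 2
        = β ^ (p ^ (m - s) * (g ^ (v + i + p ^ (s - 1) * f * t) * 2)) := by
          rw [← pow_mul]; congr 1; ring
      _ = β ^ (p ^ (m - s) * g ^ (v + h' + i + p ^ (s - 1) * f * t)) :=
          beta_congr p m s β hβ hsm hcong
  rw [hfrob, hh', show v + (h + p ^ (m - 1) * f * t₀) = (v + h) + p ^ (m - 1) * f * t₀ from by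
    ring]
  exact A_per p m e f g β hβ hm hg1 t₀ (v + h)


/-- Proposition 2(4): if `2 ∈ D_h^{(p^m)}` with `δ₁ = f/2 ∤ h`, then
`A_v ∉ F₄` for every `v`, i.e. `A_v⁴ ≠ A_v`. -/
theorem A_not_mem_F4 (p m e f r g h : ℕ) (hp : p.Prime) (hop : Odd p)
    (hm : 1 ≤ m) (hr : 1 ≤ r) (hf : f = 2 ^ r) (he : 0 < e) (hef : p - 1 = e * f)
    (hroot : ∀ j, 1 ≤ j → j ≤ m → orderOf (g : ZMod (p ^ j)) = Nat.totient (p ^ j))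
    (h2 : ∃ t < e, (2 : ZMod (p ^ m)) = (g : ZMod (p ^ m)) ^ (h + p ^ (m - 1) * f * t))
    (hh : ¬ (f / 2) ∣ h)
    {F : Type*} [Field F] (hchar : CharP F 2) (β : F) (hβ : orderOf β = p ^ m) :
    let A : ℕ → F := fun v => ∑ s ∈ Finset.Icc 1 m,
      ∑ i ∈ Finset.range (p ^ (s - 1) * f / 2), ∑ t ∈ Finset.range e,
        β ^ (p ^ (m - s) * g ^ (v + i + p ^ (s - 1) * f * t))
    ∀ v : ℕ, (A v) ^ 4 ≠ A v := by
  intro A v hA4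
  have hAf : A = Af p m e f g β := rfl
  rw [hAf] at hA4
  -- basic numerology
  have hr2 : 2 ≤ r := by
    by_contra hcon
    have hr1 : r = 1 := by omega
    apply hh
    rw [hf, hr1]
    norm_num
  have hq : f / 2 = 2 ^ (r - 1) := by
    rw [hf, show r = (r - 1) + 1 from by omega, pow_succ']
    exact Nat.mul_div_cancel_left _ (by omega)
  have hf2 : f = 2 * (f / 2) := by
    rw [hq, hf, ← pow_succ']
    congr 1
    omega
  have hf0 : 0 < f := by rw [hf]; positivity
  have horder : ∀ s, 1 ≤ s → s ≤ m → orderOf (g : ZMod (p ^ s)) = p ^ (s - 1) * f * e := by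
    intro s hs1 hsm
    rw [hroot s hs1 hsm, Nat.totient_prime_pow hp hs1, hef]
    ring
  have hg1 : ∀ s, 1 ≤ s → s ≤ m → (g : ZMod (p ^ s)) ^ (p ^ (s - 1) * f * e) = 1 := by
    intro s hs1 hsm
    have h0 := pow_orderOf_eq_one (g : ZMod (p ^ s))
    rwa [horder s hs1 hsm] at h0
  -- 2-adic decomposition of h
  have h0 : h ≠ 0 := by
    intro hzero
    exact hh (hzero ▸ dvd_zero _)
  obtain ⟨a, u, hu2, hhu⟩ := Nat.exists_eq_pow_mul_and_not_dvd h0 2 (by omega)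
  have har : a + 2 ≤ r := by
    by_contra hcon
    apply hh
    rw [hq, hhu]
    exact Dvd.dvd.mul_right (pow_dvd_pow 2 (by omega)) u
  -- construct even solution n₀ of n₀ * h ≡ δ (mod P)
  have huodd : Odd u := Nat.odd_iff.mpr (by omega)
  obtain ⟨k, hk⟩ : ∃ k, u * u = 2 * k + 1 := by
    obtain ⟨k, hk⟩ := huodd.mul huodd
    exact ⟨k, by omega⟩
  set n₀ := 2 ^ (r - 1 - a) * p ^ (m - 1) * u with hn₀
  have hfq : f = 2 * 2 ^ (r - 1) := by
    rw [hf, ← pow_succ']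
    congr 1
    omega
  have hn₀h : n₀ * h = p ^ (m - 1) * (f / 2) + p ^ (m - 1) * f * k := by
    calc n₀ * h = 2 ^ (r - 1 - a) * 2 ^ a * p ^ (m - 1) * (u * u) := by
          rw [hn₀, hhu]; ring
      _ = 2 ^ (r - 1) * p ^ (m - 1) * (2 * k + 1) := by
          rw [← pow_add, show r - 1 - a + a = r - 1 from by omega, hk]
      _ = p ^ (m - 1) * (f / 2) + p ^ (m - 1) * f * k := by
          rw [hq, hfq]; ring
  obtain ⟨j, hj⟩ : ∃ j, n₀ = 2 * j :=
    ⟨2 ^ (r - 2 - a) * p ^ (m - 1) * u, by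
      rw [hn₀, show r - 1 - a = (r - 2 - a) + 1 from by omega, pow_succ']; ring⟩
  have hper : ∀ j, Af p m e f g β (v + j * (2 * h)) = Af p m e f g β v := by
    intro j
    induction j with
    | zero => simp
    | succ j ih =>
      have harg : v + (j + 1) * (2 * h) = ((v + j * (2 * h)) + h) + h := by ring
      rw [harg, ← A_sq p m e f g h hp hchar β hβ hm h2 hg1 ((v + j * (2 * h)) + h),
        ← A_sq p m e f g h hp hchar β hβ hm h2 hg1 (v + j * (2 * h))]
      have hpow : (Af p m e f g β (v + j * (2 * h)) ^ 2) ^ 2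
          = Af p m e f g β (v + j * (2 * h)) ^ 4 := by ring
      rw [hpow, ih]
      exact hA4
  have heq1 : Af p m e f g β (v + n₀ * h) = Af p m e f g β v := by
    rw [show v + n₀ * h = v + j * (2 * h) from by rw [hj]; ring]
    exact hper j
  have heq2 : Af p m e f g β (v + n₀ * h) = Af p m e f g β v + 1 := by
    rw [show v + n₀ * h = (v + p ^ (m - 1) * (f / 2)) + p ^ (m - 1) * f * k from by
      rw [hn₀h]; ring]
    rw [A_per p m e f g β hβ hm hg1 k (v + p ^ (m - 1) * (f / 2))]
    exact A_delta p m e f g hp hop hchar β hβ hm he hf2 hf0 hef horder v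
  have hcontr : Af p m e f g β v + 0 = Af p m e f g β v + 1 := by
    rw [add_zero]
    exact heq1.symm.trans heq2
  exact one_ne_zero (add_left_cancel hcontr).symm
end
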